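/- arXiv:1711.03593 — 5 statements merged into one kernel-verified Lean document; each statement's English description precedes it below -/
import Mathlib

section
/- Let 0 < a₁ < a₂ and 0 < b₁ < b₂, and let Δ = {(u,v) : v > 0, a₁ ≤ u/v ≤ a₂, b₁ ≤ v ≤ b₂} be a trapezium in the Euclidean upper half-plane. Then Ψ(Δ) = {(x,y) ∈ ℍ : a₁ ≤ x ≤ a₂, b₂⁻² ≤ y ≤ b₁⁻²}, where Ψ(u,v) = (u/v, v⁻²), and the Euclidean area of Δ equals (a₂−a₁)(b₂²−b₁²)/2, which is half the hyperbolic area of Ψ(Δ). -/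
open MeasureTheory Set

noncomputable def Psi : ℝ × ℝ → ℝ × ℝ := fun p => (p.1 / p.2, (p.2 ^ 2)⁻¹)

theorem stmt_5 (a₁ a₂ b₁ b₂ : ℝ) (ha₁ : 0 < a₁) (ha : a₁ < a₂)
    (hb₁ : 0 < b₁) (hb : b₁ < b₂) :
    (Psi '' {p : ℝ × ℝ | 0 < p.2 ∧ a₁ ≤ p.1 / p.2 ∧ p.1 / p.2 ≤ a₂ ∧
        b₁ ≤ p.2 ∧ p.2 ≤ b₂} =
      {q : ℝ × ℝ | a₁ ≤ q.1 ∧ q.1 ≤ a₂ ∧ (b₂ ^ 2)⁻¹ ≤ q.2 ∧ q.2 ≤ (b₁ ^ 2)⁻¹}) ∧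
    volume {p : ℝ × ℝ | 0 < p.2 ∧ a₁ ≤ p.1 / p.2 ∧ p.1 / p.2 ≤ a₂ ∧
        b₁ ≤ p.2 ∧ p.2 ≤ b₂} =
      ENNReal.ofReal ((a₂ - a₁) * (b₂ ^ 2 - b₁ ^ 2) / 2) ∧
    (∫ q in {q : ℝ × ℝ | a₁ ≤ q.1 ∧ q.1 ≤ a₂ ∧ (b₂ ^ 2)⁻¹ ≤ q.2 ∧ q.2 ≤ (b₁ ^ 2)⁻¹},
        (q.2 ^ 2)⁻¹ ∂volume) = (a₂ - a₁) * (b₂ ^ 2 - b₁ ^ 2) := by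
  have hb₂ : (0:ℝ) < b₂ := hb₁.trans hb
  have hinv : (b₂ ^ 2)⁻¹ ≤ (b₁ ^ 2)⁻¹ :=
    inv_anti₀ (by positivity) (by nlinarith)
  have hset : {p : ℝ × ℝ | 0 < p.2 ∧ a₁ ≤ p.1 / p.2 ∧ p.1 / p.2 ≤ a₂ ∧
        b₁ ≤ p.2 ∧ p.2 ≤ b₂} =
      {p : ℝ × ℝ | p.2 ∈ Icc b₁ b₂ ∧ p.1 ∈ Icc (a₁ * p.2) (a₂ * p.2)} := by
    ext ⟨u, v⟩
    simp only [mem_setOf_eq, mem_Icc]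
    constructor
    · rintro ⟨hv, h1, h2, h3, h4⟩
      exact ⟨⟨h3, h4⟩, (le_div_iff₀ hv).1 h1, (div_le_iff₀ hv).1 h2⟩
    · rintro ⟨⟨h3, h4⟩, h1, h2⟩
      have hv : 0 < v := lt_of_lt_of_le hb₁ h3
      exact ⟨hv, (le_div_iff₀ hv).2 h1, (div_le_iff₀ hv).2 h2, h3, h4⟩
  refine ⟨?_, ?_, ?_⟩
  · -- image equality
    ext ⟨x, y⟩
    simp only [mem_image, mem_setOf_eq, Psi, Prod.mk.injEq, Prod.exists]
    constructor
    · rintro ⟨u, v, ⟨hv, h1, h2, h3, h4⟩, hx, hy⟩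
      subst hx; subst hy
      refine ⟨h1, h2, ?_, ?_⟩
      · exact inv_anti₀ (by positivity) (by nlinarith)
      · exact inv_anti₀ (by positivity) (by nlinarith)
    · rintro ⟨h1, h2, h3, h4⟩
      have hy : 0 < y := lt_of_lt_of_le (by positivity) h3
      refine ⟨x * (Real.sqrt y)⁻¹, (Real.sqrt y)⁻¹, ?_, ?_, ?_⟩
      · have hsy : 0 < Real.sqrt y := Real.sqrt_pos.2 hy
        have hvb₁ : b₁ ≤ (Real.sqrt y)⁻¹ := by
          rw [le_inv_comm₀ hb₁ hsy]
          calc Real.sqrt y ≤ Real.sqrt ((b₁ ^ 2)⁻¹) := Real.sqrt_le_sqrt h4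
            _ = b₁⁻¹ := by rw [Real.sqrt_inv, Real.sqrt_sq hb₁.le]
        have hvb₂ : (Real.sqrt y)⁻¹ ≤ b₂ := by
          rw [inv_le_comm₀ hsy hb₂]
          calc b₂⁻¹ = Real.sqrt ((b₂ ^ 2)⁻¹) := by rw [Real.sqrt_inv, Real.sqrt_sq hb₂.le]
            _ ≤ Real.sqrt y := Real.sqrt_le_sqrt h3
        have hdiv : x * (Real.sqrt y)⁻¹ / (Real.sqrt y)⁻¹ = x :=
          mul_div_cancel_right₀ x (by positivity)
        exact ⟨by positivity, by rw [hdiv]; exact h1, by rw [hdiv]; exact h2, hvb₁, hvb₂⟩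
      · exact mul_div_cancel_right₀ x (by positivity)
      · rw [inv_pow, Real.sq_sqrt hy.le, inv_inv]
  · -- volume of trapezium
    rw [hset]
    have hmeas : MeasurableSet {p : ℝ × ℝ | p.2 ∈ Icc b₁ b₂ ∧ p.1 ∈ Icc (a₁ * p.2) (a₂ * p.2)} := by
      apply MeasurableSet.inter
      · exact measurable_snd measurableSet_Icc
      · apply measurableSet_le (f := fun p : ℝ × ℝ => a₁ * p.2) (g := fun p => p.1) (by fun_prop) (by fun_prop) |>.inter
          (measurableSet_le (f := fun p : ℝ × ℝ => p.1) (g := fun p => a₂ * p.2) (by fun_prop) (by fun_prop))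
    rw [show (volume : Measure (ℝ × ℝ)) = (volume : Measure ℝ).prod volume from rfl,
      Measure.prod_apply_symm hmeas]
    have hslice : ∀ v : ℝ, (fun u => (u, v)) ⁻¹' {p : ℝ × ℝ | p.2 ∈ Icc b₁ b₂ ∧ p.1 ∈ Icc (a₁ * p.2) (a₂ * p.2)}
        = if v ∈ Icc b₁ b₂ then Icc (a₁ * v) (a₂ * v) else ∅ := by
      intro v; ext u
      by_cases h : v ∈ Icc b₁ b₂
      · simp only [mem_preimage, mem_setOf_eq, h, true_and, if_true, eq_true h]
      · simp only [mem_preimage, mem_setOf_eq, h, false_and, if_false, mem_empty_iff_false,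
          eq_false h]
    calc ∫⁻ v, volume ((fun u => (u, v)) ⁻¹' _) ∂volume
        = ∫⁻ v, Set.indicator (Icc b₁ b₂) (fun v => ENNReal.ofReal ((a₂ - a₁) * v)) v ∂volume := by
          congr 1; ext v
          rw [hslice v]
          by_cases h : v ∈ Icc b₁ b₂
          · simp [h, Real.volume_Icc]
            ring_nf
          · simp [h]
      _ = ENNReal.ofReal ((a₂ - a₁) * (b₂ ^ 2 - b₁ ^ 2) / 2) := by
          rw [lintegral_indicator measurableSet_Icc]
          rw [← ofReal_integral_eq_lintegral_ofReal]
          · congr 1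
            rw [integral_Icc_eq_integral_Ioc, ← intervalIntegral.integral_of_le hb.le]
            rw [intervalIntegral.integral_const_mul, integral_id]
            ring
          · exact (continuous_const.mul continuous_id).integrableOn_Icc
          · filter_upwards [self_mem_ae_restrict measurableSet_Icc] with v hv
            have h1 : 0 ≤ v := le_trans hb₁.le hv.1
            have h2 : 0 ≤ a₂ - a₁ := by linarith
            positivity
  · -- hyperbolic-area integral over the rectangle
    have hst : {q : ℝ × ℝ | a₁ ≤ q.1 ∧ q.1 ≤ a₂ ∧ (b₂ ^ 2)⁻¹ ≤ q.2 ∧ q.2 ≤ (b₁ ^ 2)⁻¹}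
        = Icc a₁ a₂ ×ˢ Icc ((b₂ ^ 2)⁻¹) ((b₁ ^ 2)⁻¹) := by
      ext ⟨x, y⟩
      simp only [Set.mem_prod, mem_Icc, mem_setOf_eq]; tauto
    rw [hst, show (fun q : ℝ × ℝ => (q.2 ^ 2)⁻¹) = (fun q : ℝ × ℝ => (1:ℝ) * (q.2 ^ 2)⁻¹) by
      ext; ring]
    rw [show (volume : Measure (ℝ × ℝ)) = (volume : Measure ℝ).prod volume from rfl]
    rw [MeasureTheory.setIntegral_prod_mul (fun _ => (1:ℝ)) (fun y => (y ^ 2)⁻¹)]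
    rw [setIntegral_const, Real.volume_real_Icc_of_le ha.le]
    have key : (∫ y in Icc ((b₂ ^ 2)⁻¹) ((b₁ ^ 2)⁻¹), (y ^ 2)⁻¹) = b₂ ^ 2 - b₁ ^ 2 := by
      rw [integral_Icc_eq_integral_Ioc, ← intervalIntegral.integral_of_le hinv]
      have h0 : (0:ℝ) ∉ Icc ((b₂ ^ 2)⁻¹) ((b₁ ^ 2)⁻¹) := by
        intro h
        have h1 := h.1
        have h2 : (0:ℝ) < (b₂ ^ 2)⁻¹ := by positivity
        linarith
      have hz := integral_zpow (n := -2)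
        (Or.inr ⟨by decide, by rwa [Set.uIcc_of_le hinv]⟩)
        (a := (b₂ ^ 2)⁻¹) (b := (b₁ ^ 2)⁻¹)
      rw [show (fun y : ℝ => (y ^ 2)⁻¹) = (fun y : ℝ => y ^ (-2 : ℤ)) from funext fun y => by
        rw [zpow_neg]; norm_num, hz]
      simp [zpow_neg]
      ring
    rw [key]
    simp
end

section
/- (Mertens-type estimate) Fix 0 < α₁ < α₂ ≤ 1. For ℓ > 2 let τ(ℓ) = {(u,v) : 0 < v ≤ ℓ, α₁ ≤ u/v ≤ α₂} and let N(ℓ) be the number of lattice points (a,b) ∈ ℤ₊ × ℤ₊ with gcd(a,b) = 1 contained in τ(ℓ). Then N(ℓ) = (6/π²)·A(ℓ) + O(ℓ log ℓ) as ℓ → ∞, where A(ℓ) = (α₂−α₁)ℓ²/2 is the Euclidean area of τ(ℓ); explicitly |N(ℓ) − (6/π²)A(ℓ)| ≤ 24 ℓ log ℓ for all ℓ ≥ 2. -/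
open Finset ArithmeticFunction
open scoped ArithmeticFunction.Moebius ArithmeticFunction.zeta

open Classical in
noncomputable def Cnt (α₁ α₂ : ℝ) (d b : ℕ) : ℕ :=
  ((Finset.Icc 1 b).filter (fun a : ℕ => d ∣ a ∧ α₁ * b ≤ (a : ℝ) ∧ (a : ℝ) ≤ α₂ * b)).card

lemma mu_abs_le (n : ℕ) : ‖(μ n : ℝ)‖ ≤ 1 := by
  have := @abs_moebius_le_one n
  rw [Real.norm_eq_abs]
  exact_mod_cast this

lemma mu_summable : Summable (fun n : ℕ => (μ n : ℝ) / (n : ℝ) ^ 2) := by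
  apply Summable.of_norm_bounded (g := fun n : ℕ => 1 / (n : ℝ) ^ 2)
    (Real.summable_one_div_nat_pow.mpr one_lt_two)
  intro n
  rw [norm_div, norm_pow, Real.norm_natCast]
  rcases Nat.eq_zero_or_pos n with rfl | hn
  · simp
  · gcongr
    exact mu_abs_le n

lemma mu_tsum_eq : ∑' n : ℕ, (μ n : ℝ) / (n : ℝ) ^ 2 = 6 / Real.pi ^ 2 := by
  have hpi : (Real.pi : ℝ) ≠ 0 := Real.pi_ne_zero
  have h2 : (1 : ℝ) < (2 : ℂ).re := by norm_num
  have hz := ArithmeticFunction.LSeries_zeta_mul_Lseries_moebius h2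
  rw [ArithmeticFunction.LSeries_zeta_eq_riemannZeta h2, riemannZeta_two] at hz
  have hpic : ((Real.pi : ℂ)) ≠ 0 := Complex.ofReal_ne_zero.mpr hpi
  have hL : LSeries (fun n => (μ n : ℂ)) 2 = 6 / (Real.pi : ℂ) ^ 2 := by
    field_simp at hz ⊢
    linear_combination hz
  have hterm : ∀ n : ℕ, ((((μ n : ℝ) / (n : ℝ) ^ 2 : ℝ)) : ℂ) = LSeries.term (fun n => (μ n : ℂ)) 2 n := by
    intro n
    rcases Nat.eq_zero_or_pos n with rfl | hn
    · simp [LSeries.term]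
    · rw [LSeries.term_of_ne_zero hn.ne']
      push_cast
      rw [Complex.cpow_ofNat]
  have key : ((∑' n : ℕ, (μ n : ℝ) / (n : ℝ) ^ 2 : ℝ) : ℂ) = 6 / (Real.pi : ℂ) ^ 2 := by
    rw [Complex.ofReal_tsum, tsum_congr hterm]
    exact hL
  have h6 : ((6 / Real.pi ^ 2 : ℝ) : ℂ) = 6 / (Real.pi : ℂ) ^ 2 := by push_cast; ring
  exact Complex.ofReal_injective (key.trans h6.symm)

lemma inv_sq_summable : Summable (fun n : ℕ => ((n : ℝ) ^ 2)⁻¹) := by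
  simpa [one_div] using Real.summable_one_div_nat_pow.mpr one_lt_two

set_option maxHeartbeats 1000000 in
lemma mu_partial (L : ℕ) (hL : 1 ≤ L) :
    |∑ d ∈ Icc 1 L, (μ d : ℝ) / (d : ℝ) ^ 2 - 6 / Real.pi ^ 2| ≤ (L : ℝ)⁻¹ := by
  have h0 : ∑ i ∈ range (L + 1), (μ i : ℝ) / (i : ℝ) ^ 2
      = ∑ d ∈ Icc 1 L, (μ d : ℝ) / (d : ℝ) ^ 2 := by
    rw [Finset.range_eq_Ico, Finset.sum_eq_sum_Ico_succ_bot (by omega), Finset.Ico_add_one_right_eq_Icc]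
    simp
  have hsplit := Summable.sum_add_tsum_nat_add (f := fun n : ℕ => (μ n : ℝ) / (n : ℝ) ^ 2)
    (L + 1) mu_summable
  rw [mu_tsum_eq] at hsplit
  have htail_sum : Summable (fun i : ℕ => (μ (i + (L+1)) : ℝ) / ((i + (L+1) : ℕ) : ℝ) ^ 2) :=
    (summable_nat_add_iff (L + 1)).mpr mu_summable
  have hnorm_sum : Summable (fun i : ℕ => (((i + (L + 1) : ℕ) : ℝ) ^ 2)⁻¹) :=
    (summable_nat_add_iff (f := fun n : ℕ => ((n : ℝ) ^ 2)⁻¹) (L + 1)).mpr inv_sq_summable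
  have habs : |∑' i : ℕ, (μ (i + (L+1)) : ℝ) / ((i + (L+1) : ℕ) : ℝ) ^ 2| ≤ (L : ℝ)⁻¹ := by
    have hb : ∀ i : ℕ, |(μ (i + (L+1)) : ℝ) / ((i + (L+1) : ℕ) : ℝ) ^ 2|
        ≤ (((i + (L + 1) : ℕ) : ℝ) ^ 2)⁻¹ := by
      intro i
      rw [abs_div, div_eq_mul_inv, abs_pow, Nat.abs_cast]
      have h1 : |((μ (i + (L+1)) : ℤ) : ℝ)| ≤ 1 := by exact_mod_cast @abs_moebius_le_one (i + (L+1))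
      calc |((μ (i + (L+1)) : ℤ) : ℝ)| * ((((i + (L+1) : ℕ)) : ℝ) ^ 2)⁻¹
          ≤ 1 * ((((i + (L+1) : ℕ)) : ℝ) ^ 2)⁻¹ := by gcongr
        _ = _ := one_mul _
    calc |∑' i : ℕ, (μ (i + (L+1)) : ℝ) / ((i + (L+1) : ℕ) : ℝ) ^ 2|
        ≤ ∑' i : ℕ, |(μ (i + (L+1)) : ℝ) / ((i + (L+1) : ℕ) : ℝ) ^ 2| := by
          have h2 : Summable (fun i : ℕ => ‖(μ (i + (L+1)) : ℝ) / ((i + (L+1) : ℕ) : ℝ) ^ 2‖) := by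
            simp only [Real.norm_eq_abs]; exact htail_sum.abs
          have h3 := norm_tsum_le_tsum_norm h2
          simp only [Real.norm_eq_abs] at h3
          exact h3
      _ ≤ ∑' i : ℕ, (((i + (L + 1) : ℕ) : ℝ) ^ 2)⁻¹ :=
          Summable.tsum_le_tsum hb htail_sum.abs hnorm_sum
      _ ≤ (L : ℝ)⁻¹ := by
          apply Summable.tsum_le_of_sum_range_le hnorm_sum
          intro n
          have hre : ∑ i ∈ range n, (((i + (L + 1) : ℕ) : ℝ) ^ 2)⁻¹
              = ∑ j ∈ Ioc L (L + n), ((j : ℝ) ^ 2)⁻¹ := by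
            rw [← Finset.Ico_add_one_add_one_eq_Ioc, Finset.sum_Ico_eq_sum_range]
            apply Finset.sum_congr (by congr 1; omega)
            intro i _
            have h5 : i + (L + 1) = L + 1 + i := by omega
            rw [h5]
          rw [hre]
          rcases Nat.eq_zero_or_pos n with rfl | hn
          · simp
          · refine (sum_Ioc_inv_sq_le_sub (by omega) (by omega)).trans ?_
            have : (0:ℝ) ≤ ((L + n : ℕ) : ℝ)⁻¹ := by positivity
            linarith
  rw [← h0]
  have heq : ∑ i ∈ range (L+1), (μ i : ℝ) / (i : ℝ) ^ 2 - 6 / Real.pi ^ 2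
      = -(∑' i : ℕ, (μ (i + (L+1)) : ℝ) / ((i + (L+1) : ℕ) : ℝ) ^ 2) := by
    have := hsplit
    push_cast at this ⊢
    linarith
  rw [heq, abs_neg]
  exact habs

lemma sum_mu_divisors (n : ℕ) : ∑ d ∈ n.divisors, (μ d : ℤ) = if n = 1 then 1 else 0 := by
  have h : (μ * (ζ : ArithmeticFunction ℤ)) n = (1 : ArithmeticFunction ℤ) n := by
    rw [ArithmeticFunction.moebius_mul_coe_zeta]
  rwa [ArithmeticFunction.coe_mul_zeta_apply, ArithmeticFunction.one_apply] at h

lemma Cnt_one_eq (α₁ α₂ : ℝ) (h1 : 0 < α₁) (h12 : α₁ ≤ α₂) (h3 : α₂ ≤ 1) (m : ℕ) (hm : 1 ≤ m) :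
    Cnt α₁ α₂ 1 m = (Finset.Icc ⌈α₁ * m⌉₊ ⌊α₂ * m⌋₊).card := by
  classical
  have hm0 : (0:ℝ) < (m:ℝ) := by exact_mod_cast hm
  have h2 : 0 < α₂ := h1.trans_le h12
  rw [Cnt]
  congr 1
  ext a
  simp only [Finset.mem_filter, Finset.mem_Icc, one_dvd, true_and]
  constructor
  · rintro ⟨⟨_, _⟩, hlo, hhi⟩
    exact ⟨Nat.ceil_le.mpr hlo, Nat.le_floor hhi⟩
  · rintro ⟨hlo, hhi⟩
    have hceil : 0 < ⌈α₁ * m⌉₊ := Nat.ceil_pos.mpr (by positivity)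
    have ha1 : 1 ≤ a := le_trans hceil hlo
    have hfl : ((⌊α₂ * m⌋₊ : ℕ) : ℝ) ≤ α₂ * m := Nat.floor_le (by positivity)
    have hax : (a : ℝ) ≤ α₂ * m := le_trans (by exact_mod_cast hhi) hfl
    have ham : (a : ℝ) ≤ m := hax.trans (by nlinarith)
    exact ⟨⟨ha1, by exact_mod_cast ham⟩, le_trans (Nat.le_ceil _) (by exact_mod_cast hlo), hax⟩

lemma Cnt_one_bound (α₁ α₂ : ℝ) (h1 : 0 < α₁) (h12 : α₁ ≤ α₂) (h3 : α₂ ≤ 1) (m : ℕ)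
    (hm : 1 ≤ m) : |(Cnt α₁ α₂ 1 m : ℝ) - (α₂ - α₁) * m| ≤ 1 := by
  have hm0 : (0:ℝ) ≤ (m:ℝ) := Nat.cast_nonneg m
  have h2 : 0 < α₂ := h1.trans_le h12
  rw [Cnt_one_eq α₁ α₂ h1 h12 h3 m hm, Nat.card_Icc]
  set k := ⌈α₁ * m⌉₊ with hk
  set j := ⌊α₂ * m⌋₊ with hj
  have hk1 : α₁ * m ≤ (k:ℝ) := Nat.le_ceil _
  have hk2 : (k:ℝ) < α₁ * m + 1 := Nat.ceil_lt_add_one (by positivity)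
  have hj1 : (j:ℝ) ≤ α₂ * m := Nat.floor_le (by positivity)
  have hj2 : α₂ * m < (j:ℝ) + 1 := Nat.lt_floor_add_one _
  rcases le_or_gt k j with h | h
  · have hcast : ((j + 1 - k : ℕ) : ℝ) = (j:ℝ) + 1 - k := by
      have hkj : k ≤ j + 1 := h.trans (Nat.le_succ j)
      rw [Nat.cast_sub hkj]
      push_cast
      ring
    rw [hcast, abs_le]
    constructor <;> linarith
  · have hzero : j + 1 - k = 0 := by omega
    rw [hzero]
    have hkj : (j:ℝ) + 1 ≤ (k:ℝ) := by exact_mod_cast h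
    rw [abs_le]
    constructor
    · simp only [Nat.cast_zero]
      nlinarith
    · simp only [Nat.cast_zero]
      nlinarith

lemma Cnt_mul (α₁ α₂ : ℝ) (d m : ℕ) (hd : 1 ≤ d) :
    Cnt α₁ α₂ d (d * m) = Cnt α₁ α₂ 1 m := by
  classical
  have hd0 : (0:ℝ) < (d:ℝ) := by exact_mod_cast hd
  rw [Cnt, Cnt]
  apply Finset.card_nbij' (fun a => a / d) (fun a => d * a)
  · rintro a ha
    simp only [Finset.mem_coe, Finset.mem_filter, Finset.mem_Icc] at ha ⊢
    obtain ⟨⟨ha1, ha2⟩, hdvd, hlo, hhi⟩ := ha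
    obtain ⟨c, rfl⟩ := hdvd
    rw [Nat.mul_div_cancel_left c (by omega)]
    have hc1 : 1 ≤ c := by
      rcases Nat.eq_zero_or_pos c with rfl | h
      · omega
      · exact h
    refine ⟨⟨hc1, Nat.le_of_mul_le_mul_left ha2 (by omega)⟩, one_dvd _, ?_, ?_⟩
    · push_cast at hlo ⊢
      have h' : (d:ℝ) * (α₁ * m) ≤ (d:ℝ) * c := by linarith
      exact (mul_le_mul_iff_right₀ hd0).mp h'
    · push_cast at hhi ⊢
      have h' : (d:ℝ) * c ≤ (d:ℝ) * (α₂ * m) := by linarith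
      exact (mul_le_mul_iff_right₀ hd0).mp h'
  · rintro a ha
    simp only [Finset.mem_coe, Finset.mem_filter, Finset.mem_Icc, one_dvd, true_and] at ha ⊢
    obtain ⟨⟨ha1, ha2⟩, hlo, hhi⟩ := ha
    refine ⟨⟨Nat.one_le_iff_ne_zero.mpr (Nat.mul_ne_zero (by omega) (by omega)),
      Nat.mul_le_mul_left d ha2⟩, Dvd.intro a rfl, ?_, ?_⟩
    · push_cast
      have := (mul_le_mul_iff_right₀ hd0).mpr hlo
      linarith
    · push_cast
      have := (mul_le_mul_iff_right₀ hd0).mpr hhi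
      linarith
  · rintro a ha
    simp only [Finset.mem_coe, Finset.mem_filter, Finset.mem_Icc] at ha
    exact Nat.mul_div_cancel' ha.2.1
  · rintro a ha
    exact Nat.mul_div_cancel_left a (by omega)

open Classical in
lemma moebius_inv_count (α₁ α₂ : ℝ) (b : ℕ) (hb : 1 ≤ b) :
    ((((Finset.Icc 1 b).filter
        (fun a : ℕ => Nat.gcd a b = 1 ∧ α₁ * b ≤ (a:ℝ) ∧ (a:ℝ) ≤ α₂ * b)).card : ℤ))
      = ∑ d ∈ b.divisors, μ d * (Cnt α₁ α₂ d b : ℤ) := by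
  set P : ℕ → Prop := fun a => α₁ * b ≤ (a:ℝ) ∧ (a:ℝ) ≤ α₂ * b with hP
  set s : Finset ℕ := (Finset.Icc 1 b).filter P with hs
  have hcnt : ∀ d : ℕ, (Cnt α₁ α₂ d b : ℤ) = ∑ a ∈ s, if d ∣ a then (1:ℤ) else 0 := by
    intro d
    rw [Cnt, hs, Finset.sum_boole, Finset.filter_filter]
    norm_cast
    congr 1
    apply Finset.filter_congr
    intro a _
    simp only [hP]
    tauto
  have hgcd : ∀ a ∈ s, ∑ d ∈ b.divisors, (μ d : ℤ) * (if d ∣ a then 1 else 0)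
      = if Nat.gcd a b = 1 then (1:ℤ) else 0 := by
    intro a _
    simp_rw [mul_ite, mul_one, mul_zero]
    rw [← Finset.sum_filter]
    have hfe : b.divisors.filter (fun d => d ∣ a) = (Nat.gcd a b).divisors := by
      ext e
      simp only [Finset.mem_filter, Nat.mem_divisors]
      constructor
      · rintro ⟨⟨heb, hb0⟩, hea⟩
        exact ⟨Nat.dvd_gcd hea heb, Nat.gcd_ne_zero_right (by omega)⟩
      · rintro ⟨heg, -⟩
        exact ⟨⟨heg.trans (Nat.gcd_dvd_right a b), by omega⟩, heg.trans (Nat.gcd_dvd_left a b)⟩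
    rw [hfe, sum_mu_divisors]
  calc ((((Finset.Icc 1 b).filter
        (fun a : ℕ => Nat.gcd a b = 1 ∧ α₁ * b ≤ (a:ℝ) ∧ (a:ℝ) ≤ α₂ * b)).card : ℤ))
      = ∑ a ∈ s, if Nat.gcd a b = 1 then (1:ℤ) else 0 := by
        rw [hs, Finset.sum_boole, Finset.filter_filter]
        norm_cast
        congr 1
        apply Finset.filter_congr
        intro a _
        simp only [hP]
        tauto
    _ = ∑ a ∈ s, ∑ d ∈ b.divisors, (μ d : ℤ) * (if d ∣ a then 1 else 0) := by
        exact (Finset.sum_congr rfl hgcd).symm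
    _ = ∑ d ∈ b.divisors, μ d * (Cnt α₁ α₂ d b : ℤ) := by
        rw [Finset.sum_comm]
        apply Finset.sum_congr rfl
        intro d _
        rw [hcnt d, Finset.mul_sum]

lemma swap_divisor_sum (L : ℕ) (f : ℕ → ℕ → ℤ) :
    ∑ b ∈ Icc 1 L, ∑ d ∈ b.divisors, f d b
      = ∑ d ∈ Icc 1 L, ∑ m ∈ Icc 1 (L / d), f d (d * m) := by
  rw [Finset.sum_sigma' (Icc 1 L) (fun b => b.divisors) (fun b d => f d b),
      Finset.sum_sigma' (Icc 1 L) (fun d => Icc 1 (L / d)) (fun d m => f d (d * m))]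
  refine Finset.sum_nbij' (fun p => ⟨p.2, p.1 / p.2⟩) (fun p => ⟨p.1 * p.2, p.1⟩)
    ?_ ?_ ?_ ?_ ?_
  · rintro ⟨b, d⟩ h
    simp only [Finset.mem_sigma, Finset.mem_Icc, Nat.mem_divisors] at h ⊢
    obtain ⟨⟨hb1, hbL⟩, hdb, hb0⟩ := h
    have hd0 : d ≠ 0 := by rintro rfl; exact hb0 (Nat.eq_zero_of_zero_dvd hdb)
    have hdble : d ≤ b := Nat.le_of_dvd (by omega) hdb
    exact ⟨⟨by omega, hdble.trans hbL⟩, (Nat.one_le_div_iff (by omega)).mpr hdble,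
      Nat.div_le_div_right hbL⟩
  · rintro ⟨d, m⟩ h
    simp only [Finset.mem_sigma, Finset.mem_Icc, Nat.mem_divisors] at h ⊢
    obtain ⟨⟨hd1, hdL⟩, hm1, hmL⟩ := h
    have hdm : d * m ≤ L := by
      have h2 := (Nat.le_div_iff_mul_le (by omega : 0 < d)).mp hmL
      rw [mul_comm] at h2
      exact h2
    exact ⟨⟨Nat.one_le_iff_ne_zero.mpr (Nat.mul_ne_zero (by omega) (by omega)), hdm⟩,
      dvd_mul_right d m, Nat.mul_ne_zero (by omega) (by omega)⟩
  · rintro ⟨b, d⟩ h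
    simp only [Finset.mem_sigma, Finset.mem_Icc, Nat.mem_divisors] at h
    obtain ⟨⟨hb1, hbL⟩, hdb, hb0⟩ := h
    simp [Nat.mul_div_cancel' hdb]
  · rintro ⟨d, m⟩ h
    simp only [Finset.mem_sigma, Finset.mem_Icc] at h
    obtain ⟨⟨hd1, hdL⟩, hm1, hmL⟩ := h
    simp [Nat.mul_div_cancel_left m (by omega : 0 < d)]
  · rintro ⟨b, d⟩ h
    simp only [Finset.mem_sigma, Finset.mem_Icc, Nat.mem_divisors] at h
    obtain ⟨⟨hb1, hbL⟩, hdb, hb0⟩ := h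
    simp only
    rw [Nat.mul_div_cancel' hdb]

/-- `latticeCount α₁ α₂ ℓ` is the number of coprime positive integer lattice
points `(a,b)` with `b ≤ ℓ` and `α₁ ≤ a/b ≤ α₂`, i.e. in the triangle `τ(ℓ)`. -/
noncomputable def latticeCount (α₁ α₂ ℓ : ℝ) : ℕ :=
  Set.ncard {p : ℕ × ℕ | 0 < p.1 ∧ 0 < p.2 ∧ Nat.gcd p.1 p.2 = 1 ∧
    (p.2 : ℝ) ≤ ℓ ∧ α₁ ≤ (p.1 : ℝ) / p.2 ∧ (p.1 : ℝ) / p.2 ≤ α₂}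

open Classical in
lemma latticeCount_eq_sum (α₁ α₂ ℓ : ℝ) (h1 : 0 < α₁) (h3 : α₂ ≤ 1) (hℓ : 2 ≤ ℓ) :
    latticeCount α₁ α₂ ℓ = ∑ b ∈ Icc 1 ⌊ℓ⌋₊,
      ((Finset.Icc 1 b).filter
        (fun a : ℕ => Nat.gcd a b = 1 ∧ α₁ * b ≤ (a:ℝ) ∧ (a:ℝ) ≤ α₂ * b)).card := by
  have hℓ0 : (0:ℝ) ≤ ℓ := by linarith
  set L := ⌊ℓ⌋₊ with hL
  set F : Finset (ℕ × ℕ) := ((Icc 1 L) ×ˢ (Icc 1 L)).filter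
    (fun p => Nat.gcd p.1 p.2 = 1 ∧ α₁ * p.2 ≤ (p.1:ℝ) ∧ (p.1:ℝ) ≤ α₂ * p.2) with hF
  have hset : {p : ℕ × ℕ | 0 < p.1 ∧ 0 < p.2 ∧ Nat.gcd p.1 p.2 = 1 ∧
      (p.2 : ℝ) ≤ ℓ ∧ α₁ ≤ (p.1 : ℝ) / p.2 ∧ (p.1 : ℝ) / p.2 ≤ α₂} = ↑F := by
    ext ⟨a, b⟩
    simp only [Set.mem_setOf_eq, hF, Finset.coe_filter, Finset.mem_product, Finset.mem_Icc,
      Set.mem_setOf_eq]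
    constructor
    · rintro ⟨ha0, hb0, hg, hbl, hlo, hhi⟩
      have hb0' : (0:ℝ) < (b:ℝ) := by exact_mod_cast hb0
      have hlo' : α₁ * b ≤ (a:ℝ) := by
        rw [le_div_iff₀ hb0'] at hlo
        linarith
      have hhi' : (a:ℝ) ≤ α₂ * b := by
        rw [div_le_iff₀ hb0'] at hhi
        linarith
      have hab : a ≤ b := by
        have : (a:ℝ) ≤ (b:ℝ) := by nlinarith
        exact_mod_cast this
      have hbL : b ≤ L := Nat.le_floor hbl
      exact ⟨⟨⟨ha0, hab.trans hbL⟩, hb0, hbL⟩, hg, hlo', hhi'⟩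
    · rintro ⟨⟨⟨ha1, haL⟩, hb1, hbL⟩, hg, hlo, hhi⟩
      have hb0' : (0:ℝ) < (b:ℝ) := by exact_mod_cast hb1
      have hbl : (b:ℝ) ≤ ℓ := le_trans (by exact_mod_cast hbL) (Nat.floor_le hℓ0)
      refine ⟨ha1, hb1, hg, hbl, ?_, ?_⟩
      · rw [le_div_iff₀ hb0']
        linarith
      · rw [div_le_iff₀ hb0']
        linarith
  rw [latticeCount, hset, Set.ncard_coe_finset]
  rw [Finset.card_eq_sum_card_fiberwise (f := Prod.snd) (t := Icc 1 L)
    (fun p hp => by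
      simp only [hF, Finset.mem_coe, Finset.mem_filter, Finset.mem_product] at hp
      exact hp.1.2)]
  apply Finset.sum_congr rfl
  intro b hb
  apply Finset.card_nbij' (fun p => p.1) (fun a => (a, b))
  · rintro ⟨a, b'⟩ hp
    simp only [hF, Finset.mem_coe, Finset.mem_filter, Finset.mem_product, Finset.mem_Icc] at hp ⊢
    obtain ⟨⟨⟨⟨ha1, haL⟩, hb'⟩, hg, hlo, hhi⟩, hb2⟩ := hp
    subst hb2
    have hab : a ≤ b' := by
      have hb0' : (0:ℝ) < (b':ℝ) := by exact_mod_cast hb'.1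
      have : (a:ℝ) ≤ (b':ℝ) := by nlinarith
      exact_mod_cast this
    exact ⟨⟨ha1, hab⟩, hg, hlo, hhi⟩
  · rintro a ha
    simp only [hF, Finset.mem_coe, Finset.mem_filter, Finset.mem_product, Finset.mem_Icc] at ha ⊢
    simp only [Finset.mem_Icc] at hb
    obtain ⟨⟨ha1, hab⟩, hg, hlo, hhi⟩ := ha
    exact ⟨⟨⟨⟨ha1, hab.trans hb.2⟩, hb⟩, hg, hlo, hhi⟩, trivial⟩
  · rintro ⟨a, b'⟩ hp
    simp only [Finset.mem_coe, Finset.mem_filter] at hp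
    rw [hp.2]
  · rintro a ha
    rfl

lemma latticeCount_identity (α₁ α₂ ℓ : ℝ) (h1 : 0 < α₁) (h3 : α₂ ≤ 1) (hℓ : 2 ≤ ℓ) :
    (latticeCount α₁ α₂ ℓ : ℤ)
      = ∑ d ∈ Icc 1 ⌊ℓ⌋₊, (μ d : ℤ) * ∑ m ∈ Icc 1 (⌊ℓ⌋₊ / d), (Cnt α₁ α₂ 1 m : ℤ) := by
  rw [latticeCount_eq_sum α₁ α₂ ℓ h1 h3 hℓ]
  push_cast
  calc ∑ b ∈ Icc 1 ⌊ℓ⌋₊, (((Finset.Icc 1 b).filter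
        (fun a : ℕ => Nat.gcd a b = 1 ∧ α₁ * b ≤ (a:ℝ) ∧ (a:ℝ) ≤ α₂ * b)).card : ℤ)
      = ∑ b ∈ Icc 1 ⌊ℓ⌋₊, ∑ d ∈ b.divisors, (μ d : ℤ) * (Cnt α₁ α₂ d b : ℤ) := by
        apply Finset.sum_congr rfl
        intro b hb
        exact moebius_inv_count α₁ α₂ b (Finset.mem_Icc.mp hb).1
    _ = ∑ d ∈ Icc 1 ⌊ℓ⌋₊, ∑ m ∈ Icc 1 (⌊ℓ⌋₊ / d), (μ d : ℤ) * (Cnt α₁ α₂ d (d * m) : ℤ) :=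
        swap_divisor_sum ⌊ℓ⌋₊ (fun d b => (μ d : ℤ) * (Cnt α₁ α₂ d b : ℤ))
    _ = ∑ d ∈ Icc 1 ⌊ℓ⌋₊, (μ d : ℤ) * ∑ m ∈ Icc 1 (⌊ℓ⌋₊ / d), (Cnt α₁ α₂ 1 m : ℤ) := by
        apply Finset.sum_congr rfl
        intro d hd
        rw [Finset.mul_sum]
        apply Finset.sum_congr rfl
        intro m hm
        rw [Cnt_mul α₁ α₂ d m (Finset.mem_Icc.mp hd).1]

lemma mu_abs_le' (n : ℕ) : |(μ n : ℝ)| ≤ 1 := by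
  have := @abs_moebius_le_one n
  exact_mod_cast this

lemma sum_Icc_id_real (n : ℕ) : ∑ m ∈ Icc 1 n, (m : ℝ) = n * (n + 1) / 2 := by
  induction n with
  | zero => simp
  | succ k ih =>
    rw [Finset.sum_Icc_succ_top (by omega)]
    push_cast
    rw [ih]
    ring

lemma harmonic_Icc (L : ℕ) : ∑ d ∈ Icc 1 L, ((d : ℝ))⁻¹ = (harmonic L : ℝ) := by
  rw [harmonic]
  push_cast
  rw [show Icc 1 L = Ico 1 (L + 1) by rw [Finset.Ico_add_one_right_eq_Icc], Finset.sum_Ico_eq_sum_range]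
  simp only [Nat.add_sub_cancel]
  apply Finset.sum_congr rfl
  intro i _
  push_cast
  ring

set_option maxHeartbeats 1000000 in
theorem stmt_10 (α₁ α₂ : ℝ) (h1 : 0 < α₁) (h2 : α₁ < α₂) (h3 : α₂ ≤ 1) :
    ∀ ℓ : ℝ, 2 ≤ ℓ →
      |(latticeCount α₁ α₂ ℓ : ℝ) - (6 / Real.pi ^ 2) * ((α₂ - α₁) * ℓ ^ 2 / 2)| ≤
        24 * ℓ * Real.log ℓ := by
  intro ℓ hℓ
  have hℓ0 : (0:ℝ) < ℓ := by linarith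
  set L := ⌊ℓ⌋₊ with hLdef
  have hL2 : 2 ≤ L := Nat.le_floor (by exact_mod_cast hℓ)
  have hL1 : 1 ≤ L := by omega
  have hLr : (L : ℝ) ≤ ℓ := Nat.floor_le (by linarith)
  have hLr' : ℓ < (L : ℝ) + 1 := Nat.lt_floor_add_one ℓ
  have hLpos : (0:ℝ) < (L : ℝ) := by exact_mod_cast hL1
  have hα : 0 ≤ α₂ - α₁ := by linarith
  have hα1 : α₂ - α₁ ≤ 1 := by linarith
  -- cast identity to ℝ
  have hNZ := latticeCount_identity α₁ α₂ ℓ h1 h3 hℓ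
  have hN : (latticeCount α₁ α₂ ℓ : ℝ)
      = ∑ d ∈ Icc 1 L, (μ d : ℝ) * ∑ m ∈ Icc 1 (L / d), (Cnt α₁ α₂ 1 m : ℝ) := by
    have := congrArg (fun z : ℤ => (z : ℝ)) hNZ
    push_cast at this
    exact_mod_cast this
  set T : ℕ → ℝ := fun d => ∑ m ∈ Icc 1 (L / d), (Cnt α₁ α₂ 1 m : ℝ) with hT
  -- per-d bound
  have hTd : ∀ d ∈ Icc 1 L, |T d - (α₂ - α₁) * (ℓ / d) ^ 2 / 2| ≤ 3.5 * (ℓ / d) := by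
    intro d hd
    rw [Finset.mem_Icc] at hd
    obtain ⟨hd1, hdL⟩ := hd
    have hdr : (1:ℝ) ≤ (d:ℝ) := by exact_mod_cast hd1
    have hdr0 : (0:ℝ) < (d:ℝ) := by linarith
    set M := L / d with hM
    have hMx : ((M : ℕ) : ℝ) ≤ ℓ / d := by
      calc ((M : ℕ) : ℝ) ≤ (L : ℝ) / d := Nat.cast_div_le
        _ ≤ ℓ / d := by gcongr
    have hxM : ℓ / d < ((M : ℕ) : ℝ) + 2 := by
      have h5 : (L : ℝ) / d < ((M : ℕ) : ℝ) + 1 := by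
        rw [div_lt_iff₀ hdr0]
        have h10 := Nat.div_add_mod L d
        have h11 := Nat.mod_lt L (show 0 < d by omega)
        have h12 : L < d * M + d := by
          calc L = d * M + L % d := by rw [hM]; omega
            _ < d * M + d := Nat.add_lt_add_left h11 _
        have h13 : (L : ℝ) < (d:ℝ) * (M:ℝ) + d := by exact_mod_cast h12
        linarith
      have h6 : ℓ / d < ((L:ℝ) + 1) / d := (div_lt_div_iff_of_pos_right hdr0).mpr (by linarith)
      have h7 : ((L:ℝ) + 1)/d = (L:ℝ)/d + 1/d := by ring
      have h8 : 1 / (d:ℝ) ≤ 1 := by rw [div_le_one hdr0]; exact hdr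
      linarith
    have hMnn : (0:ℝ) ≤ ((M : ℕ) : ℝ) := Nat.cast_nonneg _
    have hsum1 : |T d - (α₂ - α₁) * M * (M + 1) / 2| ≤ ((M : ℕ) : ℝ) := by
      have heq : T d - (α₂ - α₁) * M * (M + 1) / 2
          = ∑ m ∈ Icc 1 M, ((Cnt α₁ α₂ 1 m : ℝ) - (α₂ - α₁) * m) := by
        simp only [hT]
        rw [Finset.sum_sub_distrib, ← Finset.mul_sum, sum_Icc_id_real]
        ring
      rw [heq]
      calc |∑ m ∈ Icc 1 M, ((Cnt α₁ α₂ 1 m : ℝ) - (α₂ - α₁) * m)|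
          ≤ ∑ m ∈ Icc 1 M, |(Cnt α₁ α₂ 1 m : ℝ) - (α₂ - α₁) * m| :=
            Finset.abs_sum_le_sum_abs _ _
        _ ≤ ∑ m ∈ Icc 1 M, (1:ℝ) := by
            apply Finset.sum_le_sum
            intro m hm
            exact Cnt_one_bound α₁ α₂ h1 (le_of_lt h2) h3 m (Finset.mem_Icc.mp hm).1
        _ = ((M : ℕ) : ℝ) := by
            rw [Finset.sum_const, Nat.card_Icc]
            simp
    set x := ℓ / d with hx
    have hx0 : 0 ≤ x := by positivity
    rw [abs_le] at hsum1 ⊢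
    constructor <;> nlinarith [hsum1.1, hsum1.2, sq_nonneg (x - ((M:ℕ):ℝ)), hMx, hxM, hα, hα1,
      mul_nonneg hα hx0, mul_nonneg hα hMnn]
  -- decompose
  have split : ∀ d ∈ Icc 1 L, (μ d : ℝ) * T d
      = (μ d : ℝ) * (T d - (α₂ - α₁) * (ℓ / d) ^ 2 / 2)
        + ((α₂ - α₁) * ℓ ^ 2 / 2) * ((μ d : ℝ) / (d : ℝ) ^ 2) := by
    intro d hd
    rw [div_pow]
    ring
  have key : (latticeCount α₁ α₂ ℓ : ℝ) - (6 / Real.pi ^ 2) * ((α₂ - α₁) * ℓ ^ 2 / 2)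
      = (∑ d ∈ Icc 1 L, (μ d : ℝ) * (T d - (α₂ - α₁) * (ℓ / d) ^ 2 / 2))
        + ((α₂ - α₁) * ℓ ^ 2 / 2)
          * ((∑ d ∈ Icc 1 L, (μ d : ℝ) / (d : ℝ) ^ 2) - 6 / Real.pi ^ 2) := by
    rw [hN, Finset.sum_congr rfl split, Finset.sum_add_distrib, ← Finset.mul_sum]
    ring
  rw [key]
  -- first sum bound
  have hfirst : |∑ d ∈ Icc 1 L, (μ d : ℝ) * (T d - (α₂ - α₁) * (ℓ / d) ^ 2 / 2)|
      ≤ 3.5 * ℓ * (1 + Real.log ℓ) := by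
    calc |∑ d ∈ Icc 1 L, (μ d : ℝ) * (T d - (α₂ - α₁) * (ℓ / d) ^ 2 / 2)|
        ≤ ∑ d ∈ Icc 1 L, |(μ d : ℝ) * (T d - (α₂ - α₁) * (ℓ / d) ^ 2 / 2)| :=
          Finset.abs_sum_le_sum_abs _ _
      _ ≤ ∑ d ∈ Icc 1 L, 3.5 * (ℓ / d) := by
          apply Finset.sum_le_sum
          intro d hd
          rw [abs_mul]
          calc |(μ d : ℝ)| * |T d - (α₂ - α₁) * (ℓ / d) ^ 2 / 2|
              ≤ 1 * (3.5 * (ℓ / d)) := by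
                apply mul_le_mul (mu_abs_le' d) (hTd d hd) (abs_nonneg _) zero_le_one
            _ = 3.5 * (ℓ / d) := one_mul _
      _ = 3.5 * ℓ * ∑ d ∈ Icc 1 L, ((d:ℝ))⁻¹ := by
          rw [Finset.mul_sum]
          apply Finset.sum_congr rfl
          intro d _
          rw [div_eq_mul_inv]
          ring
      _ ≤ 3.5 * ℓ * (1 + Real.log ℓ) := by
          rw [harmonic_Icc]
          have h8 : (harmonic L : ℝ) ≤ 1 + Real.log L := harmonic_le_one_add_log L
          have h9 : Real.log (L:ℝ) ≤ Real.log ℓ := Real.log_le_log hLpos hLr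
          have : (harmonic L : ℝ) ≤ 1 + Real.log ℓ := by linarith
          have hc : (0:ℝ) ≤ 3.5 * ℓ := by linarith
          exact mul_le_mul_of_nonneg_left this hc
  -- second bound
  have hsecond : |((α₂ - α₁) * ℓ ^ 2 / 2)
      * ((∑ d ∈ Icc 1 L, (μ d : ℝ) / (d : ℝ) ^ 2) - 6 / Real.pi ^ 2)| ≤ ℓ := by
    rw [abs_mul]
    have ha : |(α₂ - α₁) * ℓ ^ 2 / 2| ≤ ℓ ^ 2 / 2 := by
      rw [abs_of_nonneg (div_nonneg (mul_nonneg hα (sq_nonneg ℓ)) two_pos.le)]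
      have h20 := mul_le_mul_of_nonneg_right hα1 (by positivity : (0:ℝ) ≤ ℓ ^ 2 / 2)
      calc (α₂ - α₁) * ℓ ^ 2 / 2 = (α₂ - α₁) * (ℓ ^ 2 / 2) := by ring
        _ ≤ 1 * (ℓ ^ 2 / 2) := h20
        _ = ℓ ^ 2 / 2 := one_mul _
    have hb : |(∑ d ∈ Icc 1 L, (μ d : ℝ) / (d : ℝ) ^ 2) - 6 / Real.pi ^ 2| ≤ (L:ℝ)⁻¹ :=
      mu_partial L hL1
    have hinv : ((L:ℝ))⁻¹ ≤ 2 / ℓ := by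
      rw [inv_eq_one_div, div_le_div_iff₀ hLpos hℓ0]
      linarith
    calc |(α₂ - α₁) * ℓ ^ 2 / 2| * |(∑ d ∈ Icc 1 L, (μ d : ℝ) / (d : ℝ) ^ 2) - 6 / Real.pi ^ 2|
        ≤ (ℓ ^ 2 / 2) * (2 / ℓ) := by
          apply mul_le_mul ha (hb.trans hinv) (abs_nonneg _) (by positivity)
      _ = ℓ := by field_simp
  have hlog2 : (0.6931471803:ℝ) < Real.log ℓ :=
    lt_of_lt_of_le Real.log_two_gt_d9 (Real.log_le_log two_pos hℓ)
  have hprod : ℓ * 0.6931471803 ≤ ℓ * Real.log ℓ :=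
    mul_le_mul_of_nonneg_left (le_of_lt hlog2) (le_of_lt hℓ0)
  calc |(∑ d ∈ Icc 1 L, (μ d : ℝ) * (T d - (α₂ - α₁) * (ℓ / d) ^ 2 / 2))
        + ((α₂ - α₁) * ℓ ^ 2 / 2)
          * ((∑ d ∈ Icc 1 L, (μ d : ℝ) / (d : ℝ) ^ 2) - 6 / Real.pi ^ 2)|
      ≤ 3.5 * ℓ * (1 + Real.log ℓ) + ℓ := by
        apply (abs_add_le _ _).trans
        linarith
    _ ≤ 24 * ℓ * Real.log ℓ := by linarith
end

section
/- Fix 0 < α₁ < α₂ ≤ 1 and let N(ℓ), A(ℓ) be as in the Mertens-type estimate. Then lim_{ℓ→∞} N(ℓ)/A(ℓ) = 6/π² and lim_{ℓ→∞} N(ℓ)/ℓ² = 3(α₂−α₁)/π². -/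
open Filter

namespace Aux12CP

open Finset ArithmeticFunction

theorem tsum_moeb : ∑' d : ℕ, (ArithmeticFunction.moebius d : ℝ) / d ^ 2 = 6 / Real.pi ^ 2 := by
  have h2 : (1 : ℝ) < (2 : ℂ).re := by norm_num
  have hz : LSeries (fun n => (moebius n : ℂ)) 2 = 6 / (Real.pi : ℂ) ^ 2 := by
    have hmul := ArithmeticFunction.LSeries_zeta_mul_Lseries_moebius (s := 2) h2
    rw [ArithmeticFunction.LSeries_zeta_eq_riemannZeta h2, riemannZeta_two] at hmul
    have hπ : ((Real.pi : ℂ)) ≠ 0 := by simp [Real.pi_ne_zero]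
    field_simp at hmul ⊢
    linear_combination hmul
  have key : ((∑' d : ℕ, (moebius d : ℝ) / d ^ 2 : ℝ) : ℂ)
      = LSeries (fun n => (moebius n : ℂ)) 2 := by
    rw [Complex.ofReal_tsum]
    unfold LSeries
    congr 1
    ext d
    rcases eq_or_ne d 0 with rfl | hd
    · simp
    · rw [LSeries.term_of_ne_zero hd]
      rw [show (2 : ℂ) = ((2 : ℕ) : ℂ) by norm_num, Complex.cpow_natCast]
      push_cast
      ring
  rw [hz] at key
  have := congrArg Complex.re key
  simp only [Complex.ofReal_re] at this
  rw [this, show (6 : ℂ) / (Real.pi:ℂ)^2 = ((6 / Real.pi^2 : ℝ) : ℂ) by push_cast; ring,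
    Complex.ofReal_re]

noncomputable def S (α₁ α₂ : ℝ) (n : ℕ) : Finset (ℕ × ℕ) :=
  (Finset.Icc 1 n ×ˢ Finset.Icc 1 n).filter
    (fun p => α₁ * p.2 ≤ (p.1 : ℝ) ∧ (p.1 : ℝ) ≤ α₂ * p.2)
noncomputable def T (α₁ α₂ : ℝ) (n : ℕ) : ℕ := (S α₁ α₂ n).card
noncomputable def Ncop (α₁ α₂ : ℝ) (n : ℕ) : ℕ :=
  ((S α₁ α₂ n).filter (fun p => Nat.gcd p.1 p.2 = 1)).card


lemma mem_S {α₁ α₂ : ℝ} {n : ℕ} {p : ℕ × ℕ} :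
    p ∈ S α₁ α₂ n ↔ (1 ≤ p.1 ∧ p.1 ≤ n) ∧ (1 ≤ p.2 ∧ p.2 ≤ n) ∧
      α₁ * p.2 ≤ (p.1 : ℝ) ∧ (p.1 : ℝ) ≤ α₂ * p.2 := by
  simp [S, Finset.mem_filter, Finset.mem_product, and_assoc]

lemma scaled_card {α₁ α₂ : ℝ} (n d : ℕ) (hd : 0 < d) :
    ((S α₁ α₂ n).filter (fun p => d ∣ p.1 ∧ d ∣ p.2)).card = T α₁ α₂ (n / d) := by
  have hd0 : (d : ℝ) ≠ 0 := Nat.cast_ne_zero.mpr hd.ne'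
  have hdpos : (0 : ℝ) < d := Nat.cast_pos.mpr hd
  apply Finset.card_bij' (fun p _ => (p.1 / d, p.2 / d)) (fun q _ => (d * q.1, d * q.2))
  · intro p hp
    simp only [Finset.mem_filter] at hp
    obtain ⟨hp, hda, hdb⟩ := hp
    rw [mem_S] at hp
    obtain ⟨⟨ha1, han⟩, ⟨hb1, hbn⟩, hl, hr⟩ := hp
    have hca : ((p.1 / d : ℕ) : ℝ) = (p.1 : ℝ) / d := by
      rw [Nat.cast_div hda hd0]
    have hcb : ((p.2 / d : ℕ) : ℝ) = (p.2 : ℝ) / d := by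
      rw [Nat.cast_div hdb hd0]
    rw [mem_S]
    refine ⟨⟨?_, ?_⟩, ⟨?_, ?_⟩, ?_, ?_⟩
    · exact (Nat.one_le_div_iff hd).mpr (Nat.le_of_dvd ha1 hda)
    · exact Nat.div_le_div_right han
    · exact (Nat.one_le_div_iff hd).mpr (Nat.le_of_dvd hb1 hdb)
    · exact Nat.div_le_div_right hbn
    · rw [hca, hcb, mul_div_assoc']
      exact div_le_div_of_nonneg_right hl hdpos.le
    · rw [hca, hcb, mul_div_assoc']
      exact div_le_div_of_nonneg_right hr hdpos.le
  · intro q hq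
    simp only [Finset.mem_filter]
    refine ⟨?_, Dvd.intro _ rfl, Dvd.intro _ rfl⟩
    rw [mem_S] at hq ⊢
    obtain ⟨⟨ha1, han⟩, ⟨hb1, hbn⟩, hl, hr⟩ := hq
    refine ⟨⟨?_, ?_⟩, ⟨?_, ?_⟩, ?_, ?_⟩
    · exact Nat.one_le_iff_ne_zero.mpr (by positivity)
    · calc d * q.1 ≤ d * (n / d) := Nat.mul_le_mul_left d han
        _ ≤ n := Nat.mul_div_le n d
    · exact Nat.one_le_iff_ne_zero.mpr (by positivity)
    · calc d * q.2 ≤ d * (n / d) := Nat.mul_le_mul_left d hbn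
        _ ≤ n := Nat.mul_div_le n d
    · push_cast
      calc α₁ * ((d:ℝ) * q.2) = (d:ℝ) * (α₁ * q.2) := by ring
        _ ≤ (d:ℝ) * q.1 := by
          exact mul_le_mul_of_nonneg_left hl hdpos.le
    · push_cast
      calc ((d:ℝ) * q.1) ≤ (d:ℝ) * (α₂ * q.2) :=
          mul_le_mul_of_nonneg_left hr hdpos.le
        _ = α₂ * ((d:ℝ) * q.2) := by ring
  · intro p hp
    simp only [Finset.mem_filter] at hp
    exact Prod.ext (Nat.mul_div_cancel' hp.2.1) (Nat.mul_div_cancel' hp.2.2)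
  · intro q hq
    exact Prod.ext (Nat.mul_div_cancel_left _ hd) (Nat.mul_div_cancel_left _ hd)

lemma mob_sum {n g : ℕ} (hg1 : 1 ≤ g) (hgn : g ≤ n) :
    ∑ d ∈ Finset.Icc 1 n, (if d ∣ g then (moebius d : ℤ) else 0)
      = if g = 1 then 1 else 0 := by
  rw [← Finset.sum_filter]
  have hfe : (Finset.Icc 1 n).filter (· ∣ g) = g.divisors := by
    ext d
    simp only [Finset.mem_filter, Finset.mem_Icc, Nat.mem_divisors]
    constructor
    · rintro ⟨⟨_, _⟩, hdg⟩; exact ⟨hdg, by omega⟩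
    · rintro ⟨hdg, hg0⟩
      exact ⟨⟨Nat.one_le_iff_ne_zero.mpr (fun h => by simp [h] at hdg; omega),
        (Nat.le_of_dvd (by omega) hdg).trans hgn⟩, hdg⟩
  rw [hfe]
  have h := congrArg (fun f : ArithmeticFunction ℤ => f g) ArithmeticFunction.moebius_mul_coe_zeta
  simp only [ArithmeticFunction.coe_mul_zeta_apply, ArithmeticFunction.one_apply] at h
  exact h

lemma moebius_identity {α₁ α₂ : ℝ} (n : ℕ) :
    (Ncop α₁ α₂ n : ℤ) =
      ∑ d ∈ Finset.Icc 1 n, moebius d * (T α₁ α₂ (n / d) : ℤ) := by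
  have hmem : ∀ p ∈ S α₁ α₂ n, 1 ≤ Nat.gcd p.1 p.2 ∧ Nat.gcd p.1 p.2 ≤ n := by
    intro p hp
    simp only [S, Finset.mem_filter, Finset.mem_product, Finset.mem_Icc] at hp
    constructor
    · have := Nat.gcd_pos_of_pos_left p.2 (by omega : 0 < p.1)
      omega
    · exact (Nat.le_of_dvd (by omega) (Nat.gcd_dvd_right _ _)).trans hp.1.2.2
  have step1 : (Ncop α₁ α₂ n : ℤ)
      = ∑ p ∈ S α₁ α₂ n, (if Nat.gcd p.1 p.2 = 1 then (1 : ℤ) else 0) := by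
    rw [Ncop, Finset.card_filter]
    push_cast
    rfl
  rw [step1]
  have step2 : ∀ p ∈ S α₁ α₂ n, (if Nat.gcd p.1 p.2 = 1 then (1 : ℤ) else 0)
      = ∑ d ∈ Finset.Icc 1 n, (if d ∣ p.1 ∧ d ∣ p.2 then (moebius d : ℤ) else 0) := by
    intro p hp
    obtain ⟨h1, h2⟩ := hmem p hp
    rw [← mob_sum h1 h2]
    refine Finset.sum_congr rfl fun d _ => ?_
    congr 1
    simp [Nat.dvd_gcd_iff]
  rw [Finset.sum_congr rfl step2, Finset.sum_comm]
  refine Finset.sum_congr rfl fun d hd => ?_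
  rw [← Finset.sum_filter, Finset.sum_const, nsmul_eq_mul,
    scaled_card n d (by simp at hd; omega)]
  ring

lemma gauss (m : ℕ) : ∑ b ∈ Finset.Icc 1 m, (b : ℝ) = m * (m + 1) / 2 := by
  induction m with
  | zero => simp
  | succ k ih =>
    rw [Finset.sum_Icc_succ_top (by omega : 1 ≤ k + 1), ih]
    push_cast
    ring

lemma T_bound {α₁ α₂ : ℝ} (h1 : 0 < α₁) (h2 : α₁ < α₂) (h3 : α₂ ≤ 1) (m : ℕ) :
    |(T α₁ α₂ m : ℝ) - (α₂ - α₁) * m ^ 2 / 2| ≤ 2 * (m : ℝ) := by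
  have hT : T α₁ α₂ m = ∑ b ∈ Finset.Icc 1 m,
      ((Finset.Icc 1 m).filter (fun a : ℕ => α₁ * b ≤ (a : ℝ) ∧ (a : ℝ) ≤ α₂ * b)).card := by
    rw [T, S, Finset.card_filter, Finset.sum_product_right]
    exact Finset.sum_congr rfl fun b _ => (Finset.card_filter _ _).symm
  -- identify each fiber with an interval
  have hfib : ∀ b ∈ Finset.Icc 1 m,
      ((Finset.Icc 1 m).filter (fun a : ℕ => α₁ * b ≤ (a : ℝ) ∧ (a : ℝ) ≤ α₂ * b))
        = Finset.Icc ⌈α₁ * b⌉₊ ⌊α₂ * b⌋₊ := by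
    intro b hb
    simp only [Finset.mem_Icc] at hb
    have hb0 : (0 : ℝ) < b := by exact_mod_cast Nat.lt_of_lt_of_le Nat.zero_lt_one hb.1
    have hα₂ : (0:ℝ) < α₂ := h1.trans h2
    have hα₂b : 0 ≤ α₂ * b := by positivity
    ext a
    simp only [Finset.mem_filter, Finset.mem_Icc]
    constructor
    · rintro ⟨⟨_, _⟩, hl, hr⟩
      exact ⟨Nat.ceil_le.mpr hl, Nat.le_floor hr⟩
    · rintro ⟨hl, hr⟩
      have hcl : (1 : ℕ) ≤ ⌈α₁ * b⌉₊ := by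
        rw [Nat.one_le_ceil_iff]; positivity
      have hfl : ⌊α₂ * b⌋₊ ≤ m := by
        have : α₂ * b ≤ (m : ℝ) := by
          calc α₂ * b ≤ 1 * b := by gcongr
            _ = b := one_mul _
            _ ≤ m := by exact_mod_cast hb.2
        simpa using Nat.floor_le_of_le this
      refine ⟨⟨hcl.trans hl, hr.trans hfl⟩, ?_, ?_⟩
      · calc α₁ * b ≤ (⌈α₁ * b⌉₊ : ℝ) := Nat.le_ceil _
          _ ≤ a := by exact_mod_cast hl
      · calc (a : ℝ) ≤ ⌊α₂ * b⌋₊ := by exact_mod_cast hr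
          _ ≤ α₂ * b := Nat.floor_le hα₂b
  -- per-fiber bounds
  have hbnd : ∀ b ∈ Finset.Icc 1 m,
      (α₂ - α₁) * b - 1 ≤ ((Finset.Icc ⌈α₁ * b⌉₊ ⌊α₂ * b⌋₊).card : ℝ) ∧
      ((Finset.Icc ⌈α₁ * b⌉₊ ⌊α₂ * b⌋₊).card : ℝ) ≤ (α₂ - α₁) * b + 1 := by
    intro b hb
    simp only [Finset.mem_Icc] at hb
    have hb0 : (0 : ℝ) < b := by exact_mod_cast Nat.lt_of_lt_of_le Nat.zero_lt_one hb.1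
    have hα₂ : (0:ℝ) < α₂ := h1.trans h2
    have hα₁b : (0:ℝ) ≤ α₁ * b := by positivity
    have hα₂b : (0:ℝ) ≤ α₂ * b := by positivity
    set x := ⌈α₁ * b⌉₊ with hx
    set y := ⌊α₂ * b⌋₊ with hy
    have e1 : α₁ * b ≤ (x : ℝ) := Nat.le_ceil _
    have e2 : (x : ℝ) < α₁ * b + 1 := Nat.ceil_lt_add_one hα₁b
    have e3 : (y : ℝ) ≤ α₂ * b := Nat.floor_le hα₂b
    have e4 : α₂ * b < (y : ℝ) + 1 := Nat.lt_floor_add_one _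
    rw [Nat.card_Icc]
    rcases le_or_gt x (y + 1) with hc | hc
    · rw [Nat.cast_sub hc]
      push_cast
      constructor <;> nlinarith
    · exfalso
      have : (y : ℝ) + 1 + 1 ≤ x := by exact_mod_cast hc
      nlinarith
  -- Gauss sum
  have hgauss := gauss m
  -- combine
  have hlo : (α₂ - α₁) * (m * (m+1) / 2) - m ≤ (T α₁ α₂ m : ℝ) := by
    rw [hT]
    push_cast
    calc (α₂ - α₁) * (m * (m+1) / 2) - m
        = ∑ b ∈ Finset.Icc 1 m, ((α₂ - α₁) * (b:ℝ) - 1) := by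
          rw [Finset.sum_sub_distrib, ← Finset.mul_sum, hgauss, Finset.sum_const,
            Nat.card_Icc]
          simp
      _ ≤ _ := by
          refine Finset.sum_le_sum fun b hb => ?_
          rw [hfib b hb]
          exact (hbnd b hb).1
  have hhi : (T α₁ α₂ m : ℝ) ≤ (α₂ - α₁) * (m * (m+1) / 2) + m := by
    rw [hT]
    push_cast
    calc ∑ b ∈ Finset.Icc 1 m, (((Finset.Icc 1 m).filter
          (fun a : ℕ => α₁ * b ≤ (a : ℝ) ∧ (a : ℝ) ≤ α₂ * b)).card : ℝ)
        ≤ ∑ b ∈ Finset.Icc 1 m, ((α₂ - α₁) * (b:ℝ) + 1) := by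
          refine Finset.sum_le_sum fun b hb => ?_
          rw [hfib b hb]
          exact (hbnd b hb).2
      _ = (α₂ - α₁) * (m * (m+1) / 2) + m := by
          rw [Finset.sum_add_distrib, ← Finset.mul_sum, hgauss, Finset.sum_const,
            Nat.card_Icc]
          simp
  have hd : (0:ℝ) ≤ α₂ - α₁ := by linarith
  have hd1 : α₂ - α₁ ≤ 1 := by linarith
  have hm : (0:ℝ) ≤ m := Nat.cast_nonneg m
  rw [abs_le]
  constructor <;> nlinarith

lemma abs_moeb_real (d : ℕ) : |(moebius d : ℝ)| ≤ 1 := by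
  have := ArithmeticFunction.abs_moebius_le_one (n := d)
  exact_mod_cast this

lemma summable_moeb : Summable (fun d : ℕ => (moebius d : ℝ) / d ^ 2) := by
  refine Summable.of_abs (Summable.of_nonneg_of_le (fun d => abs_nonneg _) (fun d => ?_)
    (Real.summable_one_div_nat_pow.mpr (by norm_num : 1 < 2)))
  rcases eq_or_ne d 0 with rfl | hd
  · simp
  · rw [abs_div, abs_of_nonneg (by positivity : (0:ℝ) ≤ (d:ℝ)^2)]
    exact div_le_div_of_nonneg_right (abs_moeb_real d) (by positivity)

lemma Icc_one_sum_eq {M : Type*} [AddCommMonoid M] (f : ℕ → M) (h0 : f 0 = 0) (n : ℕ) :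
    ∑ d ∈ Finset.Icc 1 n, f d = ∑ d ∈ Finset.range (n + 1), f d := by
  rw [Finset.sum_range_succ', h0, add_zero, ← Finset.Ico_add_one_right_eq_Icc,
    Finset.sum_Ico_eq_sum_range]
  simp [add_comm]

lemma partial_moeb : Tendsto (fun n : ℕ => ∑ d ∈ Finset.Icc 1 n, (moebius d : ℝ) / d ^ 2)
    atTop (nhds (∑' d : ℕ, (moebius d : ℝ) / d ^ 2)) := by
  have h := summable_moeb.hasSum.tendsto_sum_nat
  have h2 : Tendsto (fun n : ℕ => n + 1) atTop atTop := tendsto_add_atTop_nat 1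
  have := h.comp h2
  refine this.congr fun n => ?_
  exact (Icc_one_sum_eq _ (by simp) n).symm

lemma harmonic_over_n : Tendsto (fun n : ℕ => (∑ d ∈ Finset.Icc 1 n, (1 : ℝ) / d) / n)
    atTop (nhds 0) := by
  have h := tendsto_one_div_add_atTop_nhds_zero_nat.cesaro
  refine h.congr fun n => ?_
  rw [div_eq_inv_mul]
  congr 1
  rw [← Finset.Ico_add_one_right_eq_Icc, Finset.sum_Ico_eq_sum_range]
  simp [add_comm]

lemma term_bound {α₁ α₂ : ℝ} (h1 : 0 < α₁) (h2 : α₁ < α₂) (h3 : α₂ ≤ 1)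
    {n d : ℕ} (hn : 1 ≤ n) (hd1 : 1 ≤ d) :
    |(T α₁ α₂ (n / d) : ℝ) / n ^ 2 - ((α₂ - α₁) / 2) / d ^ 2| ≤ 3 / ((n:ℝ) * d) := by
  have hn0 : (0:ℝ) < n := by exact_mod_cast hn
  have hd0 : (0:ℝ) < d := by exact_mod_cast hd1
  set q : ℕ := n / d with hq
  set r : ℝ := (n : ℝ) / d with hr
  have hq1 : (q : ℝ) ≤ r := Nat.cast_div_le
  have hq2 : r < q + 1 := by
    rw [hr, div_lt_iff₀ hd0]
    have : n < (q + 1) * d := (Nat.div_lt_iff_lt_mul (by omega)).mp (by omega)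
    exact_mod_cast this
  have hq0 : (0:ℝ) ≤ q := Nat.cast_nonneg q
  have hTq := T_bound h1 h2 h3 q
  have hD0 : (0:ℝ) < α₂ - α₁ := by linarith
  have hD1 : α₂ - α₁ ≤ 1 := by linarith
  have h6 : (0:ℝ) ≤ r ^ 2 - (q:ℝ) ^ 2 := by nlinarith
  have h5 : r ^ 2 - (q:ℝ) ^ 2 ≤ 2 * r := by nlinarith
  have h7 : (α₂ - α₁) * (r ^ 2 - (q:ℝ) ^ 2) ≤ 2 * r := by nlinarith
  have h8 : (0:ℝ) ≤ (α₂ - α₁) * (r ^ 2 - (q:ℝ) ^ 2) := mul_nonneg hD0.le h6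
  have key : |(T α₁ α₂ q : ℝ) - (α₂ - α₁) / 2 * r ^ 2| ≤ 3 * r := by
    rw [abs_le] at hTq ⊢
    constructor <;> nlinarith [hTq.1, hTq.2, h7, h8, hq1, hq0]
  have e : (T α₁ α₂ q : ℝ) / n ^ 2 - ((α₂ - α₁) / 2) / d ^ 2
      = ((T α₁ α₂ q : ℝ) - (α₂ - α₁) / 2 * r ^ 2) / n ^ 2 := by
    rw [hr]; field_simp
  rw [e, abs_div, abs_of_nonneg (by positivity : (0:ℝ) ≤ (n:ℝ)^2)]
  have step : |(T α₁ α₂ q : ℝ) - (α₂ - α₁) / 2 * r ^ 2| / (n:ℝ) ^ 2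
      ≤ (3 * r) / (n:ℝ) ^ 2 :=
    div_le_div_of_nonneg_right key (by positivity)
  refine step.trans_eq ?_
  rw [hr]
  field_simp

lemma nat_limit {α₁ α₂ : ℝ} (h1 : 0 < α₁) (h2 : α₁ < α₂) (h3 : α₂ ≤ 1) :
    Tendsto (fun n : ℕ => (Ncop α₁ α₂ n : ℝ) / n ^ 2) atTop
      (nhds (3 * (α₂ - α₁) / Real.pi ^ 2)) := by
  set D : ℝ := (α₂ - α₁) / 2 with hD
  set H : ℕ → ℝ := fun n => D * ∑ d ∈ Finset.Icc 1 n, (moebius d : ℝ) / d ^ 2 with hH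
  set F : ℕ → ℝ := fun n => (Ncop α₁ α₂ n : ℝ) / n ^ 2 with hF
  have hHlim : Tendsto H atTop (nhds (D * (6 / Real.pi ^ 2))) := by
    have := partial_moeb.const_mul D
    rwa [tsum_moeb] at this
  have hdiff : Tendsto (fun n => F n - H n) atTop (nhds 0) := by
    rw [tendsto_zero_iff_norm_tendsto_zero]
    apply squeeze_zero' (Eventually.of_forall fun n => norm_nonneg _)
      (g := fun n : ℕ => 3 * ((∑ d ∈ Finset.Icc 1 n, (1:ℝ)/d) / n))
    · filter_upwards [eventually_ge_atTop 1] with n hn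
      have hn0 : (0:ℝ) < n := by exact_mod_cast hn
      have hNc : (Ncop α₁ α₂ n : ℝ)
          = ∑ d ∈ Finset.Icc 1 n, (moebius d : ℝ) * (T α₁ α₂ (n / d) : ℝ) := by
        have := moebius_identity (α₁ := α₁) (α₂ := α₂) n
        exact_mod_cast this
      have e1 : F n - H n = ∑ d ∈ Finset.Icc 1 n,
          (moebius d : ℝ) * ((T α₁ α₂ (n / d) : ℝ) / n ^ 2 - D / d ^ 2) := by
        simp only [hF, hH]
        rw [hNc, Finset.sum_div, Finset.mul_sum, ← Finset.sum_sub_distrib]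
        refine Finset.sum_congr rfl fun d hd => ?_
        ring
      rw [Real.norm_eq_abs, e1]
      calc |∑ d ∈ Finset.Icc 1 n, (moebius d : ℝ) * ((T α₁ α₂ (n / d) : ℝ) / n ^ 2 - D / d ^ 2)|
          ≤ ∑ d ∈ Finset.Icc 1 n, |(moebius d : ℝ) * ((T α₁ α₂ (n / d) : ℝ) / n ^ 2 - D / d ^ 2)| :=
            Finset.abs_sum_le_sum_abs _ _
        _ ≤ ∑ d ∈ Finset.Icc 1 n, 3 / ((n:ℝ) * d) := by
            refine Finset.sum_le_sum fun d hd => ?_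
            simp only [Finset.mem_Icc] at hd
            rw [abs_mul]
            calc |(moebius d : ℝ)| * |(T α₁ α₂ (n / d) : ℝ) / n ^ 2 - D / d ^ 2|
                ≤ 1 * |(T α₁ α₂ (n / d) : ℝ) / n ^ 2 - D / d ^ 2| :=
                  mul_le_mul_of_nonneg_right (abs_moeb_real d) (abs_nonneg _)
              _ = |(T α₁ α₂ (n / d) : ℝ) / n ^ 2 - D / d ^ 2| := one_mul _
              _ ≤ 3 / ((n:ℝ) * d) := term_bound h1 h2 h3 hn hd.1
        _ = 3 * ((∑ d ∈ Finset.Icc 1 n, (1:ℝ)/d) / n) := by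
            rw [Finset.sum_div, Finset.mul_sum]
            refine Finset.sum_congr rfl fun d hd => ?_
            rw [mul_comm (n:ℝ) (d:ℝ)]
            rw [div_div]
            ring
    · have := harmonic_over_n.const_mul (3:ℝ)
      simpa using this
  have : Tendsto F atTop (nhds (0 + D * (6 / Real.pi ^ 2))) := by
    have := hdiff.add hHlim
    refine this.congr fun n => ?_
    ring
  rw [zero_add] at this
  convert this using 2
  rw [hD]
  field_simp
  ring

lemma latticeCount_eq {α₁ α₂ : ℝ} (h1 : 0 < α₁) (h3 : α₂ ≤ 1) {ℓ : ℝ} (hℓ : 0 ≤ ℓ) :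
    latticeCount α₁ α₂ ℓ = Ncop α₁ α₂ ⌊ℓ⌋₊ := by
  rw [latticeCount, Ncop]
  rw [show {p : ℕ × ℕ | 0 < p.1 ∧ 0 < p.2 ∧ Nat.gcd p.1 p.2 = 1 ∧
      (p.2 : ℝ) ≤ ℓ ∧ α₁ ≤ (p.1 : ℝ) / p.2 ∧ (p.1 : ℝ) / p.2 ≤ α₂}
      = ↑((S α₁ α₂ ⌊ℓ⌋₊).filter (fun p => Nat.gcd p.1 p.2 = 1)) from ?_,
    Set.ncard_coe_finset]
  ext ⟨a, b⟩
  simp only [Set.mem_setOf_eq, Finset.coe_filter, S, Finset.mem_filter,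
    Finset.mem_product, Finset.mem_Icc]
  constructor
  · rintro ⟨ha, hb, hg, hbl, hl, hr⟩
    have hb0 : (0:ℝ) < b := by exact_mod_cast hb
    have hl' : α₁ * b ≤ (a:ℝ) := by rwa [le_div_iff₀ hb0] at hl
    have hr' : (a:ℝ) ≤ α₂ * b := by rwa [div_le_iff₀ hb0] at hr
    have hal : (a:ℝ) ≤ ℓ := by
      calc (a:ℝ) ≤ α₂ * b := hr'
        _ ≤ 1 * b := by gcongr
        _ = b := one_mul _
        _ ≤ ℓ := hbl
    exact ⟨⟨⟨⟨ha, Nat.le_floor hal⟩, hb, Nat.le_floor hbl⟩, hl', hr'⟩, hg⟩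
  · rintro ⟨⟨⟨⟨ha, _⟩, hb, hbf⟩, hl', hr'⟩, hg⟩
    have hb0 : (0:ℝ) < b := by exact_mod_cast hb
    refine ⟨ha, hb, hg, ?_, ?_, ?_⟩
    · calc (b:ℝ) ≤ ⌊ℓ⌋₊ := by exact_mod_cast hbf
        _ ≤ ℓ := Nat.floor_le hℓ
    · rwa [le_div_iff₀ hb0]
    · rwa [div_le_iff₀ hb0]


end Aux12CP

theorem stmt_12 (α₁ α₂ : ℝ) (h1 : 0 < α₁) (h2 : α₁ < α₂) (h3 : α₂ ≤ 1) :
    Tendsto (fun ℓ : ℝ =>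
        (latticeCount α₁ α₂ ℓ : ℝ) / ((α₂ - α₁) * ℓ ^ 2 / 2)) atTop
      (nhds (6 / Real.pi ^ 2)) ∧
    Tendsto (fun ℓ : ℝ => (latticeCount α₁ α₂ ℓ : ℝ) / ℓ ^ 2) atTop
      (nhds (3 * (α₂ - α₁) / Real.pi ^ 2)) := by
  have hsec : Tendsto (fun ℓ : ℝ => (latticeCount α₁ α₂ ℓ : ℝ) / ℓ ^ 2) atTop
      (nhds (3 * (α₂ - α₁) / Real.pi ^ 2)) := by
    have hfl : Tendsto (fun ℓ : ℝ => ⌊ℓ⌋₊) atTop atTop := tendsto_nat_floor_atTop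
    have hA : Tendsto (fun ℓ : ℝ => (Aux12CP.Ncop α₁ α₂ ⌊ℓ⌋₊ : ℝ) / (⌊ℓ⌋₊ : ℝ) ^ 2) atTop
        (nhds (3 * (α₂ - α₁) / Real.pi ^ 2)) := (Aux12CP.nat_limit h1 h2 h3).comp hfl
    have hB : Tendsto (fun ℓ : ℝ => ((⌊ℓ⌋₊ : ℝ) / ℓ) ^ 2) atTop (nhds 1) := by
      have := (tendsto_nat_floor_div_atTop (R := ℝ)).pow 2
      simpa using this
    have := hA.mul hB
    rw [mul_one] at this
    refine this.congr' ?_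
    filter_upwards [eventually_ge_atTop (1:ℝ)] with ℓ hℓ
    have hℓ0 : (0:ℝ) ≤ ℓ := by linarith
    have hf1 : 1 ≤ ⌊ℓ⌋₊ := Nat.le_floor (by simpa using hℓ)
    have hf0 : (0:ℝ) < (⌊ℓ⌋₊ : ℝ) := by exact_mod_cast hf1
    rw [Aux12CP.latticeCount_eq h1 h3 hℓ0]
    have hl0 : (0:ℝ) < ℓ := by linarith
    field_simp
  refine ⟨?_, hsec⟩
  have := hsec.mul_const (2 / (α₂ - α₁))
  have hval : 3 * (α₂ - α₁) / Real.pi ^ 2 * (2 / (α₂ - α₁)) = 6 / Real.pi ^ 2 := by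
    have : α₂ - α₁ ≠ 0 := by linarith
    field_simp
    ring
  rw [hval] at this
  refine this.congr fun ℓ => ?_
  have hc : α₂ - α₁ ≠ 0 := by linarith
  simp only [div_eq_mul_inv, mul_inv, inv_inv]
  ring
end

section
/- For any region R ⊂ ℝ₊² bounded by the lines v = ℓ and v = ℓ+1 and two rays through the origin of slopes 1/α₂ ≤ 1/α₁ (with 0 < α₁ < α₂ ≤ 1), the number ω(ℓ) of positive integer lattice points in τ(ℓ+1)∖τ(ℓ) satisfies |ω(ℓ) − (α₂−α₁)(2ℓ+1)/2| ≤ 3 for all ℓ > 2, where τ(r) = {(u,v) : 0 < v ≤ r, α₁ ≤ u/v ≤ α₂}. -/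
/-- Number of positive integer lattice points in τ(ℓ+1) ∖ τ(ℓ), where
τ(r) = {(u,v) : 0 < v ≤ r, α₁ ≤ u/v ≤ α₂}. -/
noncomputable def omegaCount (α₁ α₂ ℓ : ℝ) : ℕ :=
  Set.ncard {p : ℕ × ℕ | 0 < p.1 ∧ 0 < p.2 ∧
    α₁ ≤ (p.1 : ℝ) / p.2 ∧ (p.1 : ℝ) / p.2 ≤ α₂ ∧
    ℓ < (p.2 : ℝ) ∧ (p.2 : ℝ) ≤ ℓ + 1}

theorem stmt_14 (α₁ α₂ : ℝ) (h1 : 0 < α₁) (h2 : α₁ < α₂) (h3 : α₂ ≤ 1) :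
    ∀ ℓ : ℝ, 2 < ℓ →
      |(omegaCount α₁ α₂ ℓ : ℝ) - (α₂ - α₁) * (2 * ℓ + 1) / 2| ≤ 3 := by
  intro ℓ hℓ
  set n : ℕ := ⌊ℓ⌋.toNat + 1 with hn
  have hfl0 : (0:ℤ) ≤ ⌊ℓ⌋ := Int.le_floor.2 (by push_cast; linarith)
  have hfl' : ((⌊ℓ⌋.toNat : ℕ) : ℝ) = (⌊ℓ⌋ : ℝ) := by
    exact_mod_cast Int.toNat_of_nonneg hfl0
  have hncast : (n:ℝ) = (⌊ℓ⌋ : ℝ) + 1 := by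
    rw [hn]; push_cast; rw [hfl']
  have hn1 : ℓ < (n:ℝ) := by rw [hncast]; exact Int.lt_floor_add_one ℓ
  have hn2 : (n:ℝ) ≤ ℓ + 1 := by rw [hncast]; linarith [Int.floor_le ℓ]
  have hnpos : (0:ℝ) < (n:ℝ) := by linarith
  set a : ℕ := ⌈α₁ * n⌉.toNat with ha
  set b : ℕ := ⌊α₂ * n⌋.toNat with hb
  have ha0 : (0:ℤ) < ⌈α₁ * n⌉ := Int.ceil_pos.2 (mul_pos h1 hnpos)
  have hb0 : (0:ℤ) ≤ ⌊α₂ * n⌋ := Int.floor_nonneg.2 (mul_pos (h1.trans h2) hnpos).le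
  have hacast : ((a:ℤ)) = ⌈α₁ * n⌉ := Int.toNat_of_nonneg ha0.le
  have hbcast : ((b:ℤ)) = ⌊α₂ * n⌋ := Int.toNat_of_nonneg hb0
  have haR1 : α₁ * n ≤ (a:ℝ) := by
    have := Int.le_ceil (α₁ * n)
    rw [← hacast] at this; exact_mod_cast this
  have haR2 : (a:ℝ) < α₁ * n + 1 := by
    have := Int.ceil_lt_add_one (α₁ * n)
    rw [← hacast] at this; exact_mod_cast this
  have hbR1 : (b:ℝ) ≤ α₂ * n := by
    have := Int.floor_le (α₂ * n)
    rw [← hbcast] at this; exact_mod_cast this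
  have hbR2 : α₂ * n - 1 < (b:ℝ) := by
    have := Int.sub_one_lt_floor (α₂ * n)
    rw [← hbcast] at this; exact_mod_cast this
  have hset : {p : ℕ × ℕ | 0 < p.1 ∧ 0 < p.2 ∧
      α₁ ≤ (p.1 : ℝ) / p.2 ∧ (p.1 : ℝ) / p.2 ≤ α₂ ∧
      ℓ < (p.2 : ℝ) ∧ (p.2 : ℝ) ≤ ℓ + 1}
      = ↑((Finset.Icc a b).image (fun u => (u, n))) := by
    ext ⟨u, v⟩
    simp only [Set.mem_setOf_eq, Finset.coe_image, Set.mem_image, Finset.mem_coe,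
      Finset.mem_Icc, Prod.mk.injEq]
    constructor
    · rintro ⟨hu, hv, hd1, hd2, hv1, hv2⟩
      have hveq : v = n := by
        have h1' : (v:ℝ) < (n:ℝ) + 1 := by linarith
        have h2' : (n:ℝ) < (v:ℝ) + 1 := by linarith
        have h1'' : v < n + 1 := by exact_mod_cast h1'
        have h2'' : n < v + 1 := by exact_mod_cast h2'
        omega
      subst hveq
      refine ⟨u, ⟨?_, ?_⟩, rfl, rfl⟩
      · have : α₁ * n ≤ (u:ℝ) := by
          rw [le_div_iff₀ hnpos] at hd1; linarith
        have : ⌈α₁ * n⌉ ≤ (u:ℤ) := Int.ceil_le.2 (by exact_mod_cast this)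
        rw [← hacast] at this; exact_mod_cast this
      · have : (u:ℝ) ≤ α₂ * n := by
          rw [div_le_iff₀ hnpos] at hd2; linarith
        have : (u:ℤ) ≤ ⌊α₂ * n⌋ := Int.le_floor.2 (by exact_mod_cast this)
        rw [← hbcast] at this; exact_mod_cast this
    · rintro ⟨u', ⟨hu1, hu2⟩, rfl, rfl⟩
      have hau : α₁ * n ≤ (u':ℝ) := by
        have : (a:ℝ) ≤ (u':ℝ) := by exact_mod_cast hu1
        linarith
      have hub : (u':ℝ) ≤ α₂ * n := by
        have : (u':ℝ) ≤ (b:ℝ) := by exact_mod_cast hu2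
        linarith
      have hu'pos : 0 < u' := by
        by_contra h
        have : u' = 0 := by omega
        subst this
        simp at hau
        nlinarith
      refine ⟨hu'pos, by omega, ?_, ?_, hn1, hn2⟩
      · rw [le_div_iff₀ hnpos]; linarith
      · rw [div_le_iff₀ hnpos]; linarith
  have hcard : omegaCount α₁ α₂ ℓ = b + 1 - a := by
    rw [omegaCount, hset, Set.ncard_coe_finset,
      Finset.card_image_of_injective _ (fun x y h => (Prod.mk.injEq _ _ _ _ ▸ h).1),
      Nat.card_Icc]
  have hab : a ≤ b + 1 := by
    by_contra h
    push_neg at h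
    have : (b:ℝ) + 2 ≤ (a:ℝ) := by exact_mod_cast h
    nlinarith
  have hcR : (omegaCount α₁ α₂ ℓ : ℝ) = (b:ℝ) + 1 - (a:ℝ) := by
    rw [hcard]
    have : b + 1 - a + a = b + 1 := by omega
    push_cast [Nat.cast_sub hab]
    ring
  rw [hcR, abs_le]
  constructor <;> nlinarith [mul_pos h1 hnpos]
end

section
/- (Optimality of the exponent 1/2) Fix 0 < α₁ < α₂ ≤ 1 and let N(ℓ) be the number of coprime positive integer pairs (a,b) with b ≤ ℓ and α₁ ≤ a/b ≤ α₂, and A(ℓ) = (α₂−α₁)ℓ²/2. Then for every ε < 1/2, limsup_{ℓ→∞} |N(ℓ)/A(ℓ) − 6/π²| · ℓ^{3/2−ε} = ∞. -/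
open Filter

lemma latticeSet_finite (α₁ α₂ ℓ : ℝ) (h3 : α₂ ≤ 1) :
    {p : ℕ × ℕ | 0 < p.1 ∧ 0 < p.2 ∧ Nat.gcd p.1 p.2 = 1 ∧
      (p.2 : ℝ) ≤ ℓ ∧ α₁ ≤ (p.1 : ℝ) / p.2 ∧ (p.1 : ℝ) / p.2 ≤ α₂}.Finite := by
  apply Set.Finite.subset ((Set.finite_Icc 1 ⌊ℓ⌋₊).prod (Set.finite_Icc 1 ⌊ℓ⌋₊))
  rintro ⟨a, b⟩ ⟨ha, hb, -, hbl, -, hab⟩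
  have hb' : b ≤ ⌊ℓ⌋₊ := Nat.le_floor hbl
  have hab' : (a:ℝ) ≤ b := (div_le_one (by exact_mod_cast hb : (0:ℝ) < b)).mp (hab.trans h3)
  have hab'' : a ≤ b := by exact_mod_cast hab'
  exact ⟨⟨ha, hab''.trans hb'⟩, ⟨hb, hb'⟩⟩

lemma jump_lemma (α₁ α₂ : ℝ) (h1 : 0 < α₁) (h2 : α₁ < α₂) (h3 : α₂ ≤ 1)
    (p : ℕ) (hp : p.Prime) :
    (latticeCount α₁ α₂ ((p:ℝ) - 1/2) : ℝ) + ((α₂ - α₁) * p - 2)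
      ≤ (latticeCount α₁ α₂ p : ℝ) := by
  have hppos : 0 < p := hp.pos
  have hprpos : (0:ℝ) < p := by exact_mod_cast hppos
  set S₁ := {q : ℕ × ℕ | 0 < q.1 ∧ 0 < q.2 ∧ Nat.gcd q.1 q.2 = 1 ∧
    (q.2 : ℝ) ≤ (p:ℝ) - 1/2 ∧ α₁ ≤ (q.1 : ℝ) / q.2 ∧ (q.1 : ℝ) / q.2 ≤ α₂} with hS₁
  set S₂ := {q : ℕ × ℕ | 0 < q.1 ∧ 0 < q.2 ∧ Nat.gcd q.1 q.2 = 1 ∧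
    (q.2 : ℝ) ≤ (p:ℝ) ∧ α₁ ≤ (q.1 : ℝ) / q.2 ∧ (q.1 : ℝ) / q.2 ≤ α₂} with hS₂
  set F : Finset ℕ := (Finset.Icc ⌈α₁*p⌉₊ ⌊α₂*p⌋₊).erase p with hF
  set T : Set (ℕ × ℕ) := (fun a => (a, p)) '' ↑F with hT
  have hTfin : T.Finite := (F.finite_toSet).image _
  have hS₁fin : S₁.Finite := latticeSet_finite α₁ α₂ _ h3
  have hS₂fin : S₂.Finite := latticeSet_finite α₁ α₂ _ h3
  -- T ⊆ S₂
  have hTsub : T ⊆ S₂ := by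
    rintro _ ⟨a, haF, rfl⟩
    have haF' : a ∈ F := haF
    rw [hF, Finset.mem_erase, Finset.mem_Icc] at haF'
    obtain ⟨hanep, hma, han⟩ := haF'
    have hapos : 0 < a := by
      have : 0 < ⌈α₁*p⌉₊ := Nat.ceil_pos.mpr (by positivity)
      omega
    have haltp : a < p := by
      have h1' : (a:ℝ) ≤ α₂ * p := le_trans (by exact_mod_cast han) (Nat.floor_le (mul_nonneg (by linarith) hprpos.le))
      have : (a:ℝ) ≤ p := h1'.trans (by nlinarith)
      have : a ≤ p := by exact_mod_cast this
      omega
    have hgcd : Nat.gcd a p = 1 :=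
      Nat.Coprime.symm (hp.coprime_iff_not_dvd.mpr (Nat.not_dvd_of_pos_of_lt hapos haltp))
    refine ⟨hapos, hppos, hgcd, le_refl _, ?_, ?_⟩
    · rw [le_div_iff₀ hprpos]
      exact le_trans (Nat.le_ceil _) (by exact_mod_cast hma)
    · rw [div_le_iff₀ hprpos]
      exact le_trans (by exact_mod_cast han) (Nat.floor_le (mul_nonneg (by linarith) hprpos.le))
  have hS₁sub : S₁ ⊆ S₂ := by
    rintro ⟨a, b⟩ ⟨ha, hb, hg, hbl, hr⟩
    exact ⟨ha, hb, hg, by linarith, hr⟩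
  have hdisj : Disjoint S₁ T := by
    rw [Set.disjoint_right]
    rintro _ ⟨a, haF, rfl⟩ hmem
    have : (p:ℝ) ≤ (p:ℝ) - 1/2 := hmem.2.2.2.1
    linarith
  -- cardinalities
  have hcard : (latticeCount α₁ α₂ ((p:ℝ) - 1/2) : ℝ) + F.card ≤ (latticeCount α₁ α₂ p : ℝ) := by
    have hun : (S₁ ∪ T).ncard = S₁.ncard + T.ncard :=
      Set.ncard_union_eq hdisj hS₁fin hTfin
    have hle : (S₁ ∪ T).ncard ≤ S₂.ncard :=
      Set.ncard_le_ncard (Set.union_subset hS₁sub hTsub) hS₂fin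
    have hTcard : T.ncard = F.card := by
      rw [hT, Set.ncard_image_of_injective _ (fun x y hxy => (Prod.mk.injEq _ _ _ _).mp hxy |>.1),
        Set.ncard_coe_finset]
    have h5 : S₁.ncard + F.card ≤ S₂.ncard := by omega
    show (S₁.ncard : ℝ) + F.card ≤ (S₂.ncard : ℝ)
    exact_mod_cast h5
  -- F.card ≥ (α₂-α₁)p - 2
  have hFcard : (α₂ - α₁) * p - 2 ≤ (F.card : ℝ) := by
    have h1' : (α₂*p - 1 : ℝ) < ⌊α₂*p⌋₊ := Nat.sub_one_lt_floor _
    have h2' : (⌈α₁*p⌉₊:ℝ) < α₁*p + 1 := Nat.ceil_lt_add_one (by positivity)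
    have hI : ((Finset.Icc ⌈α₁*p⌉₊ ⌊α₂*p⌋₊).card : ℝ) ≥ (⌊α₂*p⌋₊:ℝ) + 1 - ⌈α₁*p⌉₊ := by
      rw [Nat.card_Icc]
      calc (⌊α₂*p⌋₊:ℝ) + 1 - ⌈α₁*p⌉₊ = ((⌊α₂*p⌋₊ + 1 : ℕ):ℝ) - (⌈α₁*p⌉₊:ℕ) := by push_cast; ring
        _ ≤ ((⌊α₂*p⌋₊ + 1 - ⌈α₁*p⌉₊ : ℕ):ℝ) := by
            rcases le_or_gt (⌈α₁*p⌉₊) (⌊α₂*p⌋₊ + 1) with h | h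
            · rw [Nat.cast_sub h]
            · have h0 : ⌊α₂*p⌋₊ + 1 - ⌈α₁*p⌉₊ = 0 := Nat.sub_eq_zero_of_le h.le
              rw [h0]
              have : ((⌊α₂*p⌋₊:ℝ) + 1) < (⌈α₁*p⌉₊:ℝ) := by exact_mod_cast h
              push_cast
              linarith
    have hE : ((Finset.Icc ⌈α₁*p⌉₊ ⌊α₂*p⌋₊).card : ℝ) - 1 ≤ (F.card : ℝ) := by
      rw [hF]
      have := Finset.pred_card_le_card_erase (s := Finset.Icc ⌈α₁*p⌉₊ ⌊α₂*p⌋₊) (a := p)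
      have h4 : ((Finset.Icc ⌈α₁*p⌉₊ ⌊α₂*p⌋₊).card : ℝ) - 1 ≤
          (((Finset.Icc ⌈α₁*p⌉₊ ⌊α₂*p⌋₊).card - 1 : ℕ) : ℝ) := by
        rcases Nat.eq_zero_or_pos (Finset.Icc ⌈α₁*p⌉₊ ⌊α₂*p⌋₊).card with h | h
        · simp [h]
        · rw [Nat.cast_sub h]; simp
      exact h4.trans (by exact_mod_cast this)
    nlinarith
  linarith

set_option maxHeartbeats 1000000 in
/-- Optimality of the exponent 1/2: for every ε < 1/2 the quantity
`|N(ℓ)/A(ℓ) − 6/π²| · ℓ^(3/2−ε)` has limsup ∞ as ℓ → ∞. -/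
theorem stmt_15 (α₁ α₂ : ℝ) (h1 : 0 < α₁) (h2 : α₁ < α₂) (h3 : α₂ ≤ 1)
    (ε : ℝ) (hε : ε < 1 / 2) :
    ∀ M : ℝ, ∃ᶠ ℓ : ℝ in atTop,
      M < |(latticeCount α₁ α₂ ℓ : ℝ) / ((α₂ - α₁) * ℓ ^ 2 / 2) - 6 / Real.pi ^ 2| *
        ℓ ^ (3 / 2 - ε) := by
  intro M
  have hcpos : (0:ℝ) < α₂ - α₁ := sub_pos.mpr h2
  set c := α₂ - α₁ with hc
  set L := 6 / Real.pi ^ 2 with hLdef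
  have hpi : (3:ℝ) < Real.pi := Real.pi_gt_three
  have hLle : L ≤ 1 := by
    rw [hLdef, div_le_one (by positivity)]
    nlinarith
  have hL0 : 0 ≤ L := by rw [hLdef]; positivity
  have hexp : 0 < 1/2 - ε := by linarith
  rw [frequently_atTop]
  intro a
  set R : ℝ := max (max (a + 1) (8 / c + 1)) ((8 * |M| + 1) ^ (1/2 - ε)⁻¹ + 1) with hR
  obtain ⟨p, hpge, hp⟩ := Nat.exists_infinite_primes (⌈R⌉₊ + 1)
  have hpR : R + 1 ≤ (p:ℝ) := by
    have h' : (⌈R⌉₊:ℝ) + 1 ≤ p := by exact_mod_cast hpge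
    linarith [Nat.le_ceil R]
  have hpa : a + 2 ≤ (p:ℝ) := by
    have : a + 1 ≤ R := le_trans (le_max_left _ _) (le_max_left _ _)
    linarith
  have hpc : 8 / c + 2 ≤ (p:ℝ) := by
    have : 8 / c + 1 ≤ R := le_trans (le_max_right _ _) (le_max_left _ _)
    linarith
  have hpM : (8 * |M| + 1) ^ (1/2 - ε)⁻¹ + 1 ≤ (p:ℝ) := by
    have : (8 * |M| + 1) ^ (1/2 - ε)⁻¹ + 1 ≤ R := le_max_right _ _
    linarith
  have hprpos : (0:ℝ) < p := by
    have : (0:ℝ) ≤ (8 * |M| + 1) ^ (1/2 - ε)⁻¹ := Real.rpow_nonneg (by positivity) _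
    linarith
  have hp1 : (1:ℝ) ≤ p := by
    have : (0:ℝ) ≤ (8 * |M| + 1) ^ (1/2 - ε)⁻¹ := Real.rpow_nonneg (by positivity) _
    linarith
  set ℓ₁ : ℝ := (p:ℝ) - 1/2 with hℓ₁
  have hℓ₁pos : 0 < ℓ₁ := by rw [hℓ₁]; linarith
  set N₁ : ℝ := (latticeCount α₁ α₂ ℓ₁ : ℝ) with hN₁
  set N₂ : ℝ := (latticeCount α₁ α₂ (p:ℝ) : ℝ) with hN₂
  set A₁ : ℝ := c * ℓ₁ ^ 2 / 2 with hA₁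
  set A₂ : ℝ := c * (p:ℝ) ^ 2 / 2 with hA₂
  have hA₁pos : 0 < A₁ := by rw [hA₁]; positivity
  have hA₂pos : 0 < A₂ := by rw [hA₂]; positivity
  have hjump : N₁ + (c * p - 2) ≤ N₂ := jump_lemma α₁ α₂ h1 h2 h3 p hp
  set δ : ℝ := 1 / (4 * p) with hδ
  clear_value c L R ℓ₁ N₁ N₂ A₁ A₂ δ
  have hδpos : 0 < δ := by rw [hδ]; positivity
  -- key: one of the two points has deviation ≥ δ
  have key : ∃ ℓ : ℝ, (ℓ = ℓ₁ ∨ ℓ = (p:ℝ)) ∧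
      δ ≤ |(latticeCount α₁ α₂ ℓ : ℝ) / (c * ℓ ^ 2 / 2) - L| := by
    by_contra hcon
    push_neg at hcon
    have hc1 : |N₁ / A₁ - L| < δ := by rw [hN₁, hA₁]; exact hcon ℓ₁ (Or.inl rfl)
    have hc2 : |N₂ / A₂ - L| < δ := by rw [hN₂, hA₂]; exact hcon (p:ℝ) (Or.inr rfl)
    have hb1 : (L - δ) * A₁ < N₁ := by
      have := (abs_lt.mp hc1).1
      have h' : L - δ < N₁ / A₁ := by linarith
      calc (L - δ) * A₁ < (N₁ / A₁) * A₁ := by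
            exact mul_lt_mul_of_pos_right h' hA₁pos
        _ = N₁ := by field_simp
    have hb2 : N₂ < (L + δ) * A₂ := by
      have := (abs_lt.mp hc2).2
      have h' : N₂ / A₂ < L + δ := by linarith
      calc N₂ = (N₂ / A₂) * A₂ := by field_simp
        _ < (L + δ) * A₂ := mul_lt_mul_of_pos_right h' hA₂pos
    -- derive contradiction
    have hAdiff : A₂ - A₁ ≤ c * p / 2 := by
      rw [hA₂, hA₁, hℓ₁]; nlinarith
    have hAsum : A₂ + A₁ ≤ c * (p:ℝ)^2 := by
      rw [hA₂, hA₁, hℓ₁]; nlinarith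
    have hδA : δ * (A₂ + A₁) ≤ c * p / 4 := by
      have : δ * (A₂ + A₁) ≤ δ * (c * (p:ℝ)^2) :=
        mul_le_mul_of_nonneg_left hAsum hδpos.le
      have heq : δ * (c * (p:ℝ)^2) = c * p / 4 := by
        rw [hδ]; field_simp
      linarith
    have hLd : L * (A₂ - A₁) ≤ c * p / 2 := by
      have hd : 0 ≤ A₂ - A₁ := by rw [hA₂, hA₁, hℓ₁]; nlinarith
      nlinarith
    have hcp : 8 + 2 * c ≤ c * p := by
      have := mul_le_mul_of_nonneg_left hpc hcpos.le
      have h8 : c * (8 / c) = 8 := by field_simp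
      nlinarith
    have e1 : (L + δ) * A₂ - (L - δ) * A₁ = L * (A₂ - A₁) + δ * (A₂ + A₁) := by ring
    linarith
  obtain ⟨ℓ, hℓcases, hℓdev⟩ := key
  refine ⟨ℓ, ?_, ?_⟩
  · rcases hℓcases with rfl | rfl
    · rw [hℓ₁]; linarith
    · linarith
  · have hℓge : ℓ₁ ≤ ℓ := by
      rcases hℓcases with rfl | rfl
      · exact le_refl _
      · rw [hℓ₁]; linarith
    have hℓpos : 0 < ℓ := lt_of_lt_of_le hℓ₁pos hℓge
    have hsplit : ℓ ^ ((3:ℝ)/2 - ε) = ℓ * ℓ ^ ((1:ℝ)/2 - ε) := by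
      rw [show (3:ℝ)/2 - ε = 1 + (1/2 - ε) by ring, Real.rpow_add hℓpos, Real.rpow_one]
    have hr1 : ℓ₁ ^ ((1:ℝ)/2 - ε) ≤ ℓ ^ ((1:ℝ)/2 - ε) :=
      Real.rpow_le_rpow hℓ₁pos.le hℓge hexp.le
    have hr2 : 8 * |M| + 1 < ℓ₁ ^ ((1:ℝ)/2 - ε) := by
      have hbase : (8 * |M| + 1) ^ ((1:ℝ)/2 - ε)⁻¹ < ℓ₁ := by rw [hℓ₁]; linarith
      have h' := Real.rpow_lt_rpow (Real.rpow_nonneg (by positivity) _) hbase hexp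
      rwa [Real.rpow_inv_rpow (by positivity) (ne_of_gt hexp)] at h'
    have hδℓ : 1/8 ≤ δ * ℓ := by
      have h2ℓ : (p:ℝ) ≤ 2 * ℓ := by rw [hℓ₁] at hℓge; linarith
      have heq : δ * ℓ = ℓ / (4 * p) := by rw [hδ]; ring
      rw [heq, le_div_iff₀ (by positivity : (0:ℝ) < 4 * p)]
      linarith
    have hrpownn : 0 ≤ ℓ ^ ((1:ℝ)/2 - ε) := Real.rpow_nonneg hℓpos.le _
    calc M < (8 * |M| + 1) / 8 := by
          have : M ≤ |M| := le_abs_self M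
          linarith
      _ ≤ (1/8) * ℓ ^ ((1:ℝ)/2 - ε) := by linarith
      _ ≤ (δ * ℓ) * ℓ ^ ((1:ℝ)/2 - ε) := mul_le_mul_of_nonneg_right hδℓ hrpownn
      _ = δ * ℓ ^ ((3:ℝ)/2 - ε) := by rw [hsplit]; ring
      _ ≤ |(latticeCount α₁ α₂ ℓ : ℝ) / (c * ℓ ^ 2 / 2) - L| * ℓ ^ ((3:ℝ)/2 - ε) :=
          mul_le_mul_of_nonneg_right hℓdev (Real.rpow_nonneg hℓpos.le _)
end
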